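/- arXiv:1210.1988 — 5 statements merged into one kernel-verified Lean document; each statement's English description precedes it below -/
import Mathlib

section
/- Let π1, π2, π3 be three pairwise distinct cyclic permutations of {0,1,2,3,4}. Then there exists at most one cyclic permutation π0 of {0,1,2,3,4} such that for each j ∈ {1,2,3} there is an antiroute of size 1 from π0 to πj. -/
/-- The cyclic permutation `(a b c d e)` of `Fin 5`, sending `a ↦ b ↦ c ↦ d ↦ e ↦ a`. -/
def cyc5 (a b c d e : Fin 5) : Equiv.Perm (Fin 5) :=
  Equiv.swap a e * Equiv.swap a d * Equiv.swap a c * Equiv.swap a b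

/-- A permutation is *cyclic* if it consists of a single cycle through all elements. -/
def IsCyclicPerm {α : Type*} [Fintype α] [DecidableEq α] (σ : Equiv.Perm α) : Prop :=
  σ.IsCycle ∧ σ.support = Finset.univ

/-- `RouteList γ L κ` holds when successively applying the transpositions in the list `L`
(each, at the moment it is applied, being a swap of two symbols adjacent in the current
cyclic permutation, and acting by conjugation, i.e. by interchanging the two symbols)
transforms `γ` into `κ`. -/
def RouteList {α : Type*} [DecidableEq α] :
    Equiv.Perm α → List (Equiv.Perm α) → Equiv.Perm α → Prop
  | γ, [], κ => γ = κ
  | γ, τ :: L, κ => ∃ x y, x ≠ y ∧ τ = Equiv.swap x y ∧ (γ x = y ∨ γ y = x) ∧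
      RouteList (τ * γ * τ) L κ

/-- `P` is a *route* from `γ` to `κ`: a set of pairwise distinct transpositions that can be
ordered into a sequence whose successive application transforms `γ` into `κ`. -/
def IsRoute {α : Type*} [Fintype α] [DecidableEq α] (γ κ : Equiv.Perm α)
    (P : Finset (Equiv.Perm α)) : Prop :=
  ∃ L : List (Equiv.Perm α), L.Nodup ∧ L.toFinset = P ∧ RouteList γ L κ

/-- `P` is an *antiroute* from `γ` to `κ`: a route from `γ` to the reverse `κ⁻¹` of `κ`. -/
def IsAntiroute {α : Type*} [Fintype α] [DecidableEq α] (γ κ : Equiv.Perm α)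
    (P : Finset (Equiv.Perm α)) : Prop :=
  IsRoute γ κ⁻¹ P

/-- Auxiliary: the neighbor of `γ` obtained by swapping `x` with `γ x` and reversing. -/
def nbr (γ : Equiv.Perm (Fin 5)) (x : Fin 5) : Equiv.Perm (Fin 5) :=
  (Equiv.swap x (γ x) * γ * Equiv.swap x (γ x))⁻¹

/-- Auxiliary: the set of all neighbors of `γ`. -/
def Nset (γ : Equiv.Perm (Fin 5)) : Finset (Equiv.Perm (Fin 5)) :=
  Finset.univ.image (nbr γ)

set_option synthInstance.maxSize 2000 in
set_option synthInstance.maxHeartbeats 1000000 in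
set_option maxRecDepth 100000 in
set_option maxHeartbeats 16000000 in
theorem key' : ∀ γ : Equiv.Perm (Fin 5), γ ^ 5 = 1 → γ ≠ 1 →
    ∀ γ' : Equiv.Perm (Fin 5), γ' ^ 5 = 1 → γ' ≠ 1 →
    3 ≤ (Nset γ ∩ Nset γ').card → γ = γ' := by decide

theorem cyclic_pow_five {γ : Equiv.Perm (Fin 5)} (h : IsCyclicPerm γ) :
    γ ^ 5 = 1 ∧ γ ≠ 1 := by
  obtain ⟨hc, hs⟩ := h
  have ho : orderOf γ = 5 := by
    rw [hc.orderOf, hs, Finset.card_univ, Fintype.card_fin]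
  exact ⟨orderOf_dvd_iff_pow_eq_one.mp (by rw [ho]), hc.ne_one⟩

theorem mem_Nset_of_antiroute {γ κ : Equiv.Perm (Fin 5)}
    (h : ∃ P, IsAntiroute γ κ P ∧ P.card = 1) : κ ∈ Nset γ := by
  obtain ⟨P, ⟨L, hnd, hfs, hrl⟩, hcard⟩ := h
  have hlen : L.length = 1 := by
    rw [← List.toFinset_card_of_nodup hnd, hfs, hcard]
  obtain ⟨τ, rfl⟩ := List.length_eq_one_iff.mp hlen
  obtain ⟨x, y, hxy, rfl, hadj, heq⟩ := hrl
  have heq' : Equiv.swap x y * γ * Equiv.swap x y = κ⁻¹ := heq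
  rcases hadj with h1 | h1
  · refine Finset.mem_image.mpr ⟨x, Finset.mem_univ x, ?_⟩
    rw [nbr, h1, heq', inv_inv]
  · refine Finset.mem_image.mpr ⟨y, Finset.mem_univ y, ?_⟩
    rw [nbr, h1, Equiv.swap_comm, heq', inv_inv]

/-- If `π1, π2, π3` are three pairwise distinct cyclic permutations of `{0,1,2,3,4}`, then
there is at most one cyclic permutation `π0` admitting an antiroute of size 1 to each of
`π1`, `π2`, `π3`. -/
theorem at_most_one_common_antiroute_neighbor
    (π1 π2 π3 : Equiv.Perm (Fin 5))
    (hc1 : IsCyclicPerm π1) (hc2 : IsCyclicPerm π2) (hc3 : IsCyclicPerm π3)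
    (h12 : π1 ≠ π2) (h13 : π1 ≠ π3) (h23 : π2 ≠ π3) :
    ∀ π0 π0' : Equiv.Perm (Fin 5), IsCyclicPerm π0 → IsCyclicPerm π0' →
      (∃ P, IsAntiroute π0 π1 P ∧ P.card = 1) →
      (∃ P, IsAntiroute π0 π2 P ∧ P.card = 1) →
      (∃ P, IsAntiroute π0 π3 P ∧ P.card = 1) →
      (∃ P, IsAntiroute π0' π1 P ∧ P.card = 1) →
      (∃ P, IsAntiroute π0' π2 P ∧ P.card = 1) →
      (∃ P, IsAntiroute π0' π3 P ∧ P.card = 1) →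
      π0 = π0' := by
  intro π0 π0' hc0 hc0' a1 a2 a3 b1 b2 b3
  obtain ⟨hp5, hp1⟩ := cyclic_pow_five hc0
  obtain ⟨hp5', hp1'⟩ := cyclic_pow_five hc0'
  apply key' π0 hp5 hp1 π0' hp5' hp1'
  have hsub : ({π1, π2, π3} : Finset (Equiv.Perm (Fin 5))) ⊆ Nset π0 ∩ Nset π0' := by
    intro κ hκ
    simp only [Finset.mem_insert, Finset.mem_singleton] at hκ
    rcases hκ with rfl | rfl | rfl <;> rw [Finset.mem_inter] <;>
      exact ⟨mem_Nset_of_antiroute (by assumption), mem_Nset_of_antiroute (by assumption)⟩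
  have hcard : ({π1, π2, π3} : Finset (Equiv.Perm (Fin 5))).card = 3 := by
    rw [Finset.card_insert_of_notMem (by simp [h12, h13]),
      Finset.card_insert_of_notMem (by simp [h23]), Finset.card_singleton]
  calc 3 = ({π1, π2, π3} : Finset (Equiv.Perm (Fin 5))).card := hcard.symm
    _ ≤ _ := Finset.card_le_card hsub
end

section
/- Let π0 = (01234), π1 = (01432), π2 = (04312), π3 = (03421), cyclic permutations of {0,1,2,3,4}. Then there do NOT exist cyclic permutations γ0, γ1, γ2, γ3, γ4 of the 4-element set {a0,a1,a2,a3}, together with antiroutes P_{ij} from πi to πj for all 0 ≤ i < j ≤ 3 with |P_{01}| = |P_{02}| = |P_{03}| = 1 and |P_{12}| = |P_{13}| = |P_{23}| = 2, such that for every pair k ≠ ℓ in {0,1,2,3,4} the set Q_{kℓ} := { (a_i a_j) : 0 ≤ i < j ≤ 3 and the transposition (k ℓ) belongs to P_{ij} } is an antiroute from γk to γℓ. -/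
/-- Given sets `P i j` of transpositions of `{0,1,2,3,4}` for pairs of indices `i < j` in
`Fin 4`, the set `Q_{kℓ}` consists of the transpositions `(a_i a_j)` (for `i < j`)
such that the transposition `(k ℓ)` belongs to `P i j`. -/
def Qset (P : Fin 4 → Fin 4 → Finset (Equiv.Perm (Fin 5))) (k l : Fin 5) :
    Finset (Equiv.Perm (Fin 4)) :=
  ((Finset.univ : Finset (Fin 4 × Fin 4)).filter
      (fun p => p.1 < p.2 ∧ Equiv.swap k l ∈ P p.1 p.2)).image
    (fun p => Equiv.swap p.1 p.2)

/-- The rotations `π0 = (01234)`, `π1 = (01432)`, `π2 = (04312)`, `π3 = (03421)`. -/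
def pis : Fin 4 → Equiv.Perm (Fin 5) :=
  ![cyc5 0 1 2 3 4, cyc5 0 1 4 3 2, cyc5 0 4 3 1 2, cyc5 0 3 4 2 1]

/-! ### Auxiliary machinery -/


section aux

variable {α : Type*} [Fintype α] [DecidableEq α] {γ κ : Equiv.Perm α}
  {Q : Finset (Equiv.Perm α)}

lemma empty_route_spec (h : IsRoute γ κ Q) (hc : Q = ∅) : γ = κ := by
  obtain ⟨L, hnd, hfs, hr⟩ := h
  subst hc
  have hL : L = [] := by simpa using hfs
  subst hL
  exact hr

lemma single_route_spec (h : IsRoute γ κ Q) (hc : Q.card = 1) :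
    ∃ x y, x ≠ y ∧ (γ x = y ∨ γ y = x) ∧
      Equiv.swap x y * γ * Equiv.swap x y = κ ∧ Q = {Equiv.swap x y} := by
  obtain ⟨L, hnd, hfs, hr⟩ := h
  have hlen : L.length = 1 := by
    rw [← List.toFinset_card_of_nodup hnd, hfs, hc]
  obtain ⟨τ, rfl⟩ := List.length_eq_one_iff.mp hlen
  obtain ⟨x, y, hxy, hτ, hadj, heq⟩ := hr
  subst hτ
  exact ⟨x, y, hxy, hadj, heq, by simpa using hfs.symm⟩

lemma pair_route_spec (h : IsRoute γ κ Q) (hc : Q.card = 2) :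
    ∃ x1 y1 x2 y2, x1 ≠ y1 ∧ x2 ≠ y2 ∧ (γ x1 = y1 ∨ γ y1 = x1) ∧
      ((Equiv.swap x1 y1 * γ * Equiv.swap x1 y1) x2 = y2 ∨
        (Equiv.swap x1 y1 * γ * Equiv.swap x1 y1) y2 = x2) ∧
      Equiv.swap x2 y2 * (Equiv.swap x1 y1 * γ * Equiv.swap x1 y1) * Equiv.swap x2 y2 = κ ∧
      Q = {Equiv.swap x1 y1, Equiv.swap x2 y2} := by
  obtain ⟨L, hnd, hfs, hr⟩ := h
  have hlen : L.length = 2 := by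
    rw [← List.toFinset_card_of_nodup hnd, hfs, hc]
  obtain ⟨τ1, τ2, rfl⟩ := List.length_eq_two.mp hlen
  obtain ⟨x1, y1, hxy1, hτ1, hadj1, x2, y2, hxy2, hτ2, hadj2, heq⟩ := hr
  subst hτ1; subst hτ2
  exact ⟨x1, y1, x2, y2, hxy1, hxy2, hadj1, hadj2, heq, by simpa using hfs.symm⟩

lemma pair_finset_eq {a b c d : Equiv.Perm α} (hab : a ≠ b)
    (h : ({a, b} : Finset (Equiv.Perm α)) = {c, d}) :
    (a = c ∧ b = d) ∨ (a = d ∧ b = c) := by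
  have ha : a = c ∨ a = d := by
    have : a ∈ ({c, d} : Finset (Equiv.Perm α)) := h ▸ (by simp)
    simpa using this
  have hb : b = c ∨ b = d := by
    have : b ∈ ({c, d} : Finset (Equiv.Perm α)) := h ▸ (by simp)
    simpa using this
  rcases ha with rfl | rfl
  · rcases hb with rfl | rfl
    · exact absurd rfl hab
    · exact Or.inl ⟨rfl, rfl⟩
  · rcases hb with rfl | rfl
    · exact Or.inr ⟨rfl, rfl⟩
    · exact absurd rfl hab

end aux

lemma mem_Qset {P : Fin 4 → Fin 4 → Finset (Equiv.Perm (Fin 5))} {k l : Fin 5}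
    {τ : Equiv.Perm (Fin 4)} :
    τ ∈ Qset P k l ↔
      (Equiv.swap k l ∈ P 0 1 ∧ τ = Equiv.swap 0 1) ∨
      (Equiv.swap k l ∈ P 0 2 ∧ τ = Equiv.swap 0 2) ∨
      (Equiv.swap k l ∈ P 0 3 ∧ τ = Equiv.swap 0 3) ∨
      (Equiv.swap k l ∈ P 1 2 ∧ τ = Equiv.swap 1 2) ∨
      (Equiv.swap k l ∈ P 1 3 ∧ τ = Equiv.swap 1 3) ∨
      (Equiv.swap k l ∈ P 2 3 ∧ τ = Equiv.swap 2 3) := by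
  constructor
  · intro h
    simp only [Qset, Finset.mem_image, Finset.mem_filter, Finset.mem_univ, true_and] at h
    obtain ⟨⟨i, j⟩, ⟨hlt, hm⟩, rfl⟩ := h
    fin_cases i <;> fin_cases j <;> simp_all
  · intro h
    simp only [Qset, Finset.mem_image, Finset.mem_filter, Finset.mem_univ, true_and]
    rcases h with ⟨hm, rfl⟩ | ⟨hm, rfl⟩ | ⟨hm, rfl⟩ | ⟨hm, rfl⟩ | ⟨hm, rfl⟩ | ⟨hm, rfl⟩
    exacts [⟨(0,1), ⟨by decide, hm⟩, rfl⟩, ⟨(0,2), ⟨by decide, hm⟩, rfl⟩,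
      ⟨(0,3), ⟨by decide, hm⟩, rfl⟩, ⟨(1,2), ⟨by decide, hm⟩, rfl⟩,
      ⟨(1,3), ⟨by decide, hm⟩, rfl⟩, ⟨(2,3), ⟨by decide, hm⟩, rfl⟩]

/-! ### Pinning down the `P i j` -/

set_option maxRecDepth 100000

lemma pin01 : ∀ x y : Fin 5, x ≠ y → (pis 0 x = y ∨ pis 0 y = x) →
    Equiv.swap x y * pis 0 * Equiv.swap x y = (pis 1)⁻¹ →
    Equiv.swap x y = Equiv.swap 0 1 := by decide

lemma pin02 : ∀ x y : Fin 5, x ≠ y → (pis 0 x = y ∨ pis 0 y = x) →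
    Equiv.swap x y * pis 0 * Equiv.swap x y = (pis 2)⁻¹ →
    Equiv.swap x y = Equiv.swap 1 2 := by decide

lemma pin03 : ∀ x y : Fin 5, x ≠ y → (pis 0 x = y ∨ pis 0 y = x) →
    Equiv.swap x y * pis 0 * Equiv.swap x y = (pis 3)⁻¹ →
    Equiv.swap x y = Equiv.swap 3 4 := by decide

lemma pin12 : ∀ x1 y1 x2 y2 : Fin 5, x1 ≠ y1 → x2 ≠ y2 →
    (pis 1 x1 = y1 ∨ pis 1 y1 = x1) →
    ((Equiv.swap x1 y1 * pis 1 * Equiv.swap x1 y1) x2 = y2 ∨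
      (Equiv.swap x1 y1 * pis 1 * Equiv.swap x1 y1) y2 = x2) →
    Equiv.swap x2 y2 * (Equiv.swap x1 y1 * pis 1 * Equiv.swap x1 y1) * Equiv.swap x2 y2
      = (pis 2)⁻¹ →
    ({Equiv.swap x1 y1, Equiv.swap x2 y2} : Finset (Equiv.Perm (Fin 5)))
      = {Equiv.swap 0 2, Equiv.swap 3 4} := by decide

lemma pin13 : ∀ x1 y1 x2 y2 : Fin 5, x1 ≠ y1 → x2 ≠ y2 →
    (pis 1 x1 = y1 ∨ pis 1 y1 = x1) →
    ((Equiv.swap x1 y1 * pis 1 * Equiv.swap x1 y1) x2 = y2 ∨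
      (Equiv.swap x1 y1 * pis 1 * Equiv.swap x1 y1) y2 = x2) →
    Equiv.swap x2 y2 * (Equiv.swap x1 y1 * pis 1 * Equiv.swap x1 y1) * Equiv.swap x2 y2
      = (pis 3)⁻¹ →
    ({Equiv.swap x1 y1, Equiv.swap x2 y2} : Finset (Equiv.Perm (Fin 5)))
        = {Equiv.swap 0 2, Equiv.swap 1 2} ∨
      ({Equiv.swap x1 y1, Equiv.swap x2 y2} : Finset (Equiv.Perm (Fin 5)))
        = {Equiv.swap 2 3, Equiv.swap 2 4} := by decide

lemma pin23 : ∀ x1 y1 x2 y2 : Fin 5, x1 ≠ y1 → x2 ≠ y2 →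
    (pis 2 x1 = y1 ∨ pis 2 y1 = x1) →
    ((Equiv.swap x1 y1 * pis 2 * Equiv.swap x1 y1) x2 = y2 ∨
      (Equiv.swap x1 y1 * pis 2 * Equiv.swap x1 y1) y2 = x2) →
    Equiv.swap x2 y2 * (Equiv.swap x1 y1 * pis 2 * Equiv.swap x1 y1) * Equiv.swap x2 y2
      = (pis 3)⁻¹ →
    ({Equiv.swap x1 y1, Equiv.swap x2 y2} : Finset (Equiv.Perm (Fin 5)))
        = {Equiv.swap 0 1, Equiv.swap 0 2} ∨
      ({Equiv.swap x1 y1, Equiv.swap x2 y2} : Finset (Equiv.Perm (Fin 5)))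
        = {Equiv.swap 0 3, Equiv.swap 0 4} := by decide

/-! ### The γ-level contradictions -/

def Adj1 (g : Equiv.Perm (Fin 4)) (t : Equiv.Perm (Fin 4)) : Prop :=
  ∃ x y : Fin 4, x ≠ y ∧ (g x = y ∨ g y = x) ∧ Equiv.swap x y = t

def Adj2 (g : Equiv.Perm (Fin 4)) (T : Finset (Equiv.Perm (Fin 4))) : Prop :=
  ∃ x1 y1 x2 y2 : Fin 4, x1 ≠ y1 ∧ x2 ≠ y2 ∧ (g x1 = y1 ∨ g y1 = x1) ∧
    ((Equiv.swap x1 y1 * g * Equiv.swap x1 y1) x2 = y2 ∨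
      (Equiv.swap x1 y1 * g * Equiv.swap x1 y1) y2 = x2) ∧
    ({Equiv.swap x1 y1, Equiv.swap x2 y2} : Finset (Equiv.Perm (Fin 4))) = T

instance (g t : Equiv.Perm (Fin 4)) : Decidable (Adj1 g t) := by
  unfold Adj1; infer_instance

instance (g : Equiv.Perm (Fin 4)) (T : Finset (Equiv.Perm (Fin 4))) : Decidable (Adj2 g T) := by
  unfold Adj2; infer_instance

open Equiv in
lemma contra00 : ¬ ∃ g0 : Equiv.Perm (Fin 4),
    Adj2 g0 {swap 0 1, swap 2 3} ∧
    (Adj2 ((swap 2 3 * (swap 0 1 * g0 * swap 0 1) * swap 2 3)⁻¹) {swap 0 2, swap 1 3} ∨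
      Adj2 ((swap 0 1 * (swap 2 3 * g0 * swap 2 3) * swap 0 1)⁻¹) {swap 0 2, swap 1 3}) ∧
    Adj2 g0⁻¹ {swap 0 3, swap 1 2} := by decide

open Equiv in
lemma contra01 : ¬ ∃ g0 : Equiv.Perm (Fin 4),
    Adj1 g0 (swap 0 1) ∧ Adj1 g0 (swap 2 3) ∧
    Adj2 ((swap 0 1 * g0 * swap 0 1)⁻¹) {swap 0 2, swap 1 3} ∧
    Adj2 ((swap 2 3 * g0 * swap 2 3)⁻¹) {swap 0 3, swap 1 2} := by decide

open Equiv in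
lemma contra10 : ¬ ∃ g0 : Equiv.Perm (Fin 4),
    Adj2 g0 {swap 0 1, swap 2 3} ∧ Adj2 g0 {swap 1 2, swap 2 3} ∧
    Adj2 g0⁻¹ {swap 0 3, swap 1 2} := by decide

open Equiv in
lemma contra11 : ¬ ∃ g0 : Equiv.Perm (Fin 4),
    Adj1 g0 (swap 1 2) ∧ Adj1 g0 (swap 2 3) ∧
    Adj2 ((swap 2 3 * g0 * swap 2 3)⁻¹) {swap 0 3, swap 1 2} := by decide



/-- There do not exist cyclic permutations `γ0, …, γ4` of a 4-element set, together with
antiroutes `P i j` from `π i` to `π j` with `|P 0 1| = |P 0 2| = |P 0 3| = 1` and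
`|P 1 2| = |P 1 3| = |P 2 3| = 2`, such that for all `k ≠ ℓ` the set `Q_{kℓ}` is an
antiroute from `γ k` to `γ ℓ`. -/
theorem no_key_star_configuration :
    ¬ ∃ (γ : Fin 5 → Equiv.Perm (Fin 4))
        (P : Fin 4 → Fin 4 → Finset (Equiv.Perm (Fin 5))),
      (∀ k, IsCyclicPerm (γ k)) ∧
      (∀ i j : Fin 4, i < j → IsAntiroute (pis i) (pis j) (P i j)) ∧
      (P 0 1).card = 1 ∧ (P 0 2).card = 1 ∧ (P 0 3).card = 1 ∧
      (P 1 2).card = 2 ∧ (P 1 3).card = 2 ∧ (P 2 3).card = 2 ∧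
      (∀ k l : Fin 5, k ≠ l → IsAntiroute (γ k) (γ l) (Qset P k l)) := by
  rintro ⟨γ, P, -, hP, hc01, hc02, hc03, hc12, hc13, hc23, hQ⟩
  -- Pin down the sets `P i j`.
  obtain ⟨x, y, hxy, hadj, heq, hP01⟩ := single_route_spec (hP 0 1 (by decide)) hc01
  rw [pin01 x y hxy hadj heq] at hP01
  obtain ⟨x, y, hxy, hadj, heq, hP02⟩ := single_route_spec (hP 0 2 (by decide)) hc02
  rw [pin02 x y hxy hadj heq] at hP02
  obtain ⟨x, y, hxy, hadj, heq, hP03⟩ := single_route_spec (hP 0 3 (by decide)) hc03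
  rw [pin03 x y hxy hadj heq] at hP03
  obtain ⟨x1, y1, x2, y2, h1, h2, ha1, ha2, heq, hP12⟩ :=
    pair_route_spec (hP 1 2 (by decide)) hc12
  rw [pin12 x1 y1 x2 y2 h1 h2 ha1 ha2 heq] at hP12
  obtain ⟨x1, y1, x2, y2, h1, h2, ha1, ha2, heq, hP13⟩ :=
    pair_route_spec (hP 1 3 (by decide)) hc13
  have hpin13 := pin13 x1 y1 x2 y2 h1 h2 ha1 ha2 heq
  obtain ⟨x1p, y1p, x2p, y2p, h1p, h2p, ha1p, ha2p, heqp, hP23⟩ :=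
    pair_route_spec (hP 2 3 (by decide)) hc23
  have hpin23 := pin23 x1p y1p x2p y2p h1p h2p ha1p ha2p heqp
  rcases hpin13 with h13 | h13 <;> rcases hpin23 with h23 | h23
  · -- configuration 1 : P 1 3 = {(02),(12)}, P 2 3 = {(01),(02)}
    have hP13c : P 1 3 = {Equiv.swap 0 2, Equiv.swap 1 2} := hP13.trans h13
    have hP23c : P 2 3 = {Equiv.swap 0 1, Equiv.swap 0 2} := hP23.trans h23
    have q01 : Qset P 0 1 = ({Equiv.swap 0 1, Equiv.swap 2 3} : Finset (Equiv.Perm (Fin 4))) := by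
      apply Finset.ext; intro τ
      rw [mem_Qset, hP01, hP02, hP03, hP12, hP13c, hP23c]
      revert τ; decide
    have q03 : Qset P 0 3 = (∅ : Finset (Equiv.Perm (Fin 4))) := by
      apply Finset.ext; intro τ
      rw [mem_Qset, hP01, hP02, hP03, hP12, hP13c, hP23c]
      revert τ; decide
    have q12 : Qset P 1 2 = ({Equiv.swap 0 2, Equiv.swap 1 3} : Finset (Equiv.Perm (Fin 4))) := by
      apply Finset.ext; intro τ
      rw [mem_Qset, hP01, hP02, hP03, hP12, hP13c, hP23c]
      revert τ; decide
    have q34 : Qset P 3 4 = ({Equiv.swap 0 3, Equiv.swap 1 2} : Finset (Equiv.Perm (Fin 4))) := by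
      apply Finset.ext; intro τ
      rw [mem_Qset, hP01, hP02, hP03, hP12, hP13c, hP23c]
      revert τ; decide
    have e03 : γ 3 = (γ 0)⁻¹ := by
      have h := empty_route_spec (hQ 0 3 (by decide)) q03
      rw [h, inv_inv]
    have h01 := hQ 0 1 (by decide); rw [q01] at h01
    obtain ⟨a1, b1, a2, b2, k1, k2, ka1, ka2, keq, kQ⟩ := pair_route_spec h01 (by decide)
    have hor := pair_finset_eq
      (show Equiv.swap (0 : Fin 4) 1 ≠ Equiv.swap 2 3 by decide) kQ
    have adj0 : Adj2 (γ 0) {Equiv.swap 0 1, Equiv.swap 2 3} :=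
      ⟨a1, b1, a2, b2, k1, k2, ka1, ka2, kQ.symm⟩
    have h12 := hQ 1 2 (by decide); rw [q12] at h12
    obtain ⟨c1, d1, c2, d2, m1, m2, mc1, mc2, meq, mQ⟩ := pair_route_spec h12 (by decide)
    have adjg1 : Adj2 (γ 1) {Equiv.swap 0 2, Equiv.swap 1 3} :=
      ⟨c1, d1, c2, d2, m1, m2, mc1, mc2, mQ.symm⟩
    have h34 := hQ 3 4 (by decide); rw [q34] at h34
    obtain ⟨e1, f1, e2, f2, n1, n2, ne1, ne2, neq, nQ⟩ := pair_route_spec h34 (by decide)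
    have adjg3 : Adj2 (γ 3) {Equiv.swap 0 3, Equiv.swap 1 2} :=
      ⟨e1, f1, e2, f2, n1, n2, ne1, ne2, nQ.symm⟩
    rw [e03] at adjg3
    refine contra00 ⟨γ 0, adj0, ?_, adjg3⟩
    rcases hor with ⟨u1, u2⟩ | ⟨u1, u2⟩
    · left
      rw [← u1, ← u2] at keq
      have hg1 : γ 1 = (Equiv.swap 2 3 * (Equiv.swap 0 1 * γ 0 * Equiv.swap 0 1) *
          Equiv.swap 2 3)⁻¹ := by rw [keq, inv_inv]
      rw [← hg1]; exact adjg1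
    · right
      rw [← u1, ← u2] at keq
      have hg1 : γ 1 = (Equiv.swap 0 1 * (Equiv.swap 2 3 * γ 0 * Equiv.swap 2 3) *
          Equiv.swap 0 1)⁻¹ := by rw [keq, inv_inv]
      rw [← hg1]; exact adjg1
  · -- configuration 2 : P 1 3 = {(02),(12)}, P 2 3 = {(03),(04)}
    have hP13c : P 1 3 = {Equiv.swap 0 2, Equiv.swap 1 2} := hP13.trans h13
    have hP23c : P 2 3 = {Equiv.swap 0 3, Equiv.swap 0 4} := hP23.trans h23
    have q01 : Qset P 0 1 = ({Equiv.swap 0 1} : Finset (Equiv.Perm (Fin 4))) := by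
      apply Finset.ext; intro τ
      rw [mem_Qset, hP01, hP02, hP03, hP12, hP13c, hP23c]
      revert τ; decide
    have q03 : Qset P 0 3 = ({Equiv.swap 2 3} : Finset (Equiv.Perm (Fin 4))) := by
      apply Finset.ext; intro τ
      rw [mem_Qset, hP01, hP02, hP03, hP12, hP13c, hP23c]
      revert τ; decide
    have q12 : Qset P 1 2 = ({Equiv.swap 0 2, Equiv.swap 1 3} : Finset (Equiv.Perm (Fin 4))) := by
      apply Finset.ext; intro τ
      rw [mem_Qset, hP01, hP02, hP03, hP12, hP13c, hP23c]
      revert τ; decide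
    have q34 : Qset P 3 4 = ({Equiv.swap 0 3, Equiv.swap 1 2} : Finset (Equiv.Perm (Fin 4))) := by
      apply Finset.ext; intro τ
      rw [mem_Qset, hP01, hP02, hP03, hP12, hP13c, hP23c]
      revert τ; decide
    have h01 := hQ 0 1 (by decide); rw [q01] at h01
    obtain ⟨a1, b1, k1, ka, keq, kQ⟩ := single_route_spec h01 (by decide)
    have sw1 : Equiv.swap a1 b1 = Equiv.swap 0 1 := (Finset.singleton_inj.mp kQ).symm
    have adja : Adj1 (γ 0) (Equiv.swap 0 1) := ⟨a1, b1, k1, ka, sw1⟩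
    rw [sw1] at keq
    have hg1 : γ 1 = (Equiv.swap 0 1 * γ 0 * Equiv.swap 0 1)⁻¹ := by rw [keq, inv_inv]
    have h03 := hQ 0 3 (by decide); rw [q03] at h03
    obtain ⟨a2, b2, k2, kb, keq2, kQ2⟩ := single_route_spec h03 (by decide)
    have sw2 : Equiv.swap a2 b2 = Equiv.swap 2 3 := (Finset.singleton_inj.mp kQ2).symm
    have adjb : Adj1 (γ 0) (Equiv.swap 2 3) := ⟨a2, b2, k2, kb, sw2⟩
    rw [sw2] at keq2
    have hg3 : γ 3 = (Equiv.swap 2 3 * γ 0 * Equiv.swap 2 3)⁻¹ := by rw [keq2, inv_inv]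
    have h12 := hQ 1 2 (by decide); rw [q12] at h12
    obtain ⟨c1, d1, c2, d2, m1, m2, mc1, mc2, meq, mQ⟩ := pair_route_spec h12 (by decide)
    have adjg1 : Adj2 (γ 1) {Equiv.swap 0 2, Equiv.swap 1 3} :=
      ⟨c1, d1, c2, d2, m1, m2, mc1, mc2, mQ.symm⟩
    rw [hg1] at adjg1
    have h34 := hQ 3 4 (by decide); rw [q34] at h34
    obtain ⟨e1, f1, e2, f2, n1, n2, ne1, ne2, neq, nQ⟩ := pair_route_spec h34 (by decide)
    have adjg3 : Adj2 (γ 3) {Equiv.swap 0 3, Equiv.swap 1 2} :=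
      ⟨e1, f1, e2, f2, n1, n2, ne1, ne2, nQ.symm⟩
    rw [hg3] at adjg3
    exact contra01 ⟨γ 0, adja, adjb, adjg1, adjg3⟩
  · -- configuration 3 : P 1 3 = {(23),(24)}, P 2 3 = {(01),(02)}
    have hP13c : P 1 3 = {Equiv.swap 2 3, Equiv.swap 2 4} := hP13.trans h13
    have hP23c : P 2 3 = {Equiv.swap 0 1, Equiv.swap 0 2} := hP23.trans h23
    have q01 : Qset P 0 1 = ({Equiv.swap 0 1, Equiv.swap 2 3} : Finset (Equiv.Perm (Fin 4))) := by
      apply Finset.ext; intro τ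
      rw [mem_Qset, hP01, hP02, hP03, hP12, hP13c, hP23c]
      revert τ; decide
    have q02 : Qset P 0 2 = ({Equiv.swap 1 2, Equiv.swap 2 3} : Finset (Equiv.Perm (Fin 4))) := by
      apply Finset.ext; intro τ
      rw [mem_Qset, hP01, hP02, hP03, hP12, hP13c, hP23c]
      revert τ; decide
    have q03 : Qset P 0 3 = (∅ : Finset (Equiv.Perm (Fin 4))) := by
      apply Finset.ext; intro τ
      rw [mem_Qset, hP01, hP02, hP03, hP12, hP13c, hP23c]
      revert τ; decide
    have q34 : Qset P 3 4 = ({Equiv.swap 0 3, Equiv.swap 1 2} : Finset (Equiv.Perm (Fin 4))) := by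
      apply Finset.ext; intro τ
      rw [mem_Qset, hP01, hP02, hP03, hP12, hP13c, hP23c]
      revert τ; decide
    have e03 : γ 3 = (γ 0)⁻¹ := by
      have h := empty_route_spec (hQ 0 3 (by decide)) q03
      rw [h, inv_inv]
    have h01 := hQ 0 1 (by decide); rw [q01] at h01
    obtain ⟨a1, b1, a2, b2, k1, k2, ka1, ka2, keq, kQ⟩ := pair_route_spec h01 (by decide)
    have adj0 : Adj2 (γ 0) {Equiv.swap 0 1, Equiv.swap 2 3} :=
      ⟨a1, b1, a2, b2, k1, k2, ka1, ka2, kQ.symm⟩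
    have h02 := hQ 0 2 (by decide); rw [q02] at h02
    obtain ⟨c1, d1, c2, d2, m1, m2, mc1, mc2, meq, mQ⟩ := pair_route_spec h02 (by decide)
    have adj0b : Adj2 (γ 0) {Equiv.swap 1 2, Equiv.swap 2 3} :=
      ⟨c1, d1, c2, d2, m1, m2, mc1, mc2, mQ.symm⟩
    have h34 := hQ 3 4 (by decide); rw [q34] at h34
    obtain ⟨e1, f1, e2, f2, n1, n2, ne1, ne2, neq, nQ⟩ := pair_route_spec h34 (by decide)
    have adjg3 : Adj2 (γ 3) {Equiv.swap 0 3, Equiv.swap 1 2} :=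
      ⟨e1, f1, e2, f2, n1, n2, ne1, ne2, nQ.symm⟩
    rw [e03] at adjg3
    exact contra10 ⟨γ 0, adj0, adj0b, adjg3⟩
  · -- configuration 4 : P 1 3 = {(23),(24)}, P 2 3 = {(03),(04)}
    have hP13c : P 1 3 = {Equiv.swap 2 3, Equiv.swap 2 4} := hP13.trans h13
    have hP23c : P 2 3 = {Equiv.swap 0 3, Equiv.swap 0 4} := hP23.trans h23
    have q02 : Qset P 0 2 = ({Equiv.swap 1 2} : Finset (Equiv.Perm (Fin 4))) := by
      apply Finset.ext; intro τ
      rw [mem_Qset, hP01, hP02, hP03, hP12, hP13c, hP23c]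
      revert τ; decide
    have q03 : Qset P 0 3 = ({Equiv.swap 2 3} : Finset (Equiv.Perm (Fin 4))) := by
      apply Finset.ext; intro τ
      rw [mem_Qset, hP01, hP02, hP03, hP12, hP13c, hP23c]
      revert τ; decide
    have q34 : Qset P 3 4 = ({Equiv.swap 0 3, Equiv.swap 1 2} : Finset (Equiv.Perm (Fin 4))) := by
      apply Finset.ext; intro τ
      rw [mem_Qset, hP01, hP02, hP03, hP12, hP13c, hP23c]
      revert τ; decide
    have h02 := hQ 0 2 (by decide); rw [q02] at h02
    obtain ⟨a1, b1, k1, ka, keq, kQ⟩ := single_route_spec h02 (by decide)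
    have sw1 : Equiv.swap a1 b1 = Equiv.swap 1 2 := (Finset.singleton_inj.mp kQ).symm
    have adja : Adj1 (γ 0) (Equiv.swap 1 2) := ⟨a1, b1, k1, ka, sw1⟩
    have h03 := hQ 0 3 (by decide); rw [q03] at h03
    obtain ⟨a2, b2, k2, kb, keq2, kQ2⟩ := single_route_spec h03 (by decide)
    have sw2 : Equiv.swap a2 b2 = Equiv.swap 2 3 := (Finset.singleton_inj.mp kQ2).symm
    have adjb : Adj1 (γ 0) (Equiv.swap 2 3) := ⟨a2, b2, k2, kb, sw2⟩
    rw [sw2] at keq2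
    have hg3 : γ 3 = (Equiv.swap 2 3 * γ 0 * Equiv.swap 2 3)⁻¹ := by rw [keq2, inv_inv]
    have h34 := hQ 3 4 (by decide); rw [q34] at h34
    obtain ⟨e1, f1, e2, f2, n1, n2, ne1, ne2, neq, nQ⟩ := pair_route_spec h34 (by decide)
    have adjg3 : Adj2 (γ 3) {Equiv.swap 0 3, Equiv.swap 1 2} :=
      ⟨e1, f1, e2, f2, n1, n2, ne1, ne2, nQ.symm⟩
    rw [hg3] at adjg3
    exact contra11 ⟨γ 0, adja, adjb, adjg3⟩
end

section
/- Let G be a finite simple graph which is connected, bipartite, has at most 7 vertices, has minimum degree at least 2 and maximum degree at most 3, contains no subgraph isomorphic to K_{2,3}, contains no subgraph isomorphic to the 7-vertex graph S obtained from K4 by subdividing exactly once each of the three edges of one triangle, and in which every vertex of degree 2 lies on a cycle of length 4. Then G is isomorphic either to the 4-cycle C4 or to C̄6. -/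
/-- The 4-cycle `C4`, with vertices `0,1,2,3` and edges `01, 12, 23, 30`. -/
def cycle4 : SimpleGraph (Fin 4) := SimpleGraph.fromRel (fun i j => j = i + 1)

/-- `C̄6`: the 6-cycle with vertices `0,…,5` together with the diametral edge `03`. -/
def c6bar : SimpleGraph (Fin 6) :=
  SimpleGraph.fromRel (fun i j => j = i + 1 ∨ (i = 0 ∧ j = 3))

/-- The complete bipartite graph `K_{2,3}`, with parts `{0,1}` and `{2,3,4}`. -/
def k23 : SimpleGraph (Fin 5) :=
  SimpleGraph.fromRel (fun i j => i.val < 2 ∧ 2 ≤ j.val)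

/-- The 7-vertex graph `S` obtained from `K4` on `{0,1,2,3}` by subdividing exactly once
each of the three edges of the triangle `{1,2,3}`: vertex `4` subdivides `12`, vertex `5`
subdivides `23`, and vertex `6` subdivides `13`. -/
def sGraph : SimpleGraph (Fin 7) :=
  SimpleGraph.fromRel (fun i j =>
    (i = 0 ∧ j = 1) ∨ (i = 0 ∧ j = 2) ∨ (i = 0 ∧ j = 3) ∨
    (i = 1 ∧ j = 4) ∨ (i = 2 ∧ j = 4) ∨ (i = 2 ∧ j = 5) ∨
    (i = 3 ∧ j = 5) ∨ (i = 1 ∧ j = 6) ∨ (i = 3 ∧ j = 6))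

/-- `G` contains `H` as a subgraph: there is an injective graph homomorphism `H → G`. -/
def ContainsSubgraph {V W : Type*} (G : SimpleGraph V) (H : SimpleGraph W) : Prop :=
  ∃ f : H →g G, Function.Injective f

/-- `G` is bipartite: its vertex set admits a partition into two independent sets. -/
def IsBipartite {V : Type*} (G : SimpleGraph V) : Prop :=
  ∃ A : Set V, ∀ u v, G.Adj u v → ((u ∈ A) ↔ (v ∉ A))

/-! ### Auxiliary lemmas -/

lemma cycle4_struct {V : Type*} {G : SimpleGraph V} {v : V} (c : G.Walk v v)
    (hc : c.IsCycle) (hl : c.length = 4) :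
    ∃ x y z, G.Adj v x ∧ G.Adj x y ∧ G.Adj y z ∧ G.Adj z v ∧
      x ≠ y ∧ x ≠ z ∧ x ≠ v ∧ y ≠ z ∧ y ≠ v ∧ z ≠ v := by
  cases c with
  | nil => simp at hl
  | cons h1 p1 =>
    cases p1 with
    | nil => simp at hl
    | cons h2 p2 =>
      cases p2 with
      | nil => simp at hl
      | cons h3 p3 =>
        cases p3 with
        | nil => simp at hl
        | cons h4 p4 =>
          cases p4 with
          | cons h5 p5 => simp [SimpleGraph.Walk.length_cons] at hl
          | nil =>
            have hnd := hc.support_nodup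
            simp [SimpleGraph.Walk.support_cons, List.nodup_cons] at hnd
            exact ⟨_, _, _, h1, h2, h3, h4, by tauto, by tauto, by tauto, by tauto,
              by tauto, by tauto⟩

lemma contains_k23 {V : Type*} {G : SimpleGraph V} (a1 a2 b1 b2 b3 : V)
    (ha : a1 ≠ a2) (hb12 : b1 ≠ b2) (hb13 : b1 ≠ b3) (hb23 : b2 ≠ b3)
    (h11 : G.Adj a1 b1) (h12 : G.Adj a1 b2) (h13 : G.Adj a1 b3)
    (h21 : G.Adj a2 b1) (h22 : G.Adj a2 b2) (h23 : G.Adj a2 b3) :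
    ContainsSubgraph G k23 := by
  have n11 := h11.ne; have n12 := h12.ne; have n13 := h13.ne
  have n21 := h21.ne; have n22 := h22.ne; have n23 := h23.ne
  have m11 := n11.symm; have m12 := n12.symm; have m13 := n13.symm
  have m21 := n21.symm; have m22 := n22.symm; have m23 := n23.symm
  have ha' := ha.symm; have hb12' := hb12.symm; have hb13' := hb13.symm
  have hb23' := hb23.symm
  have hinj : Function.Injective ![a1,a2,b1,b2,b3] := by
    intro i j hij
    fin_cases i <;> fin_cases j <;> simp_all
  have hmap : ∀ i j : Fin 5, k23.Adj i j →
      G.Adj (![a1,a2,b1,b2,b3] i) (![a1,a2,b1,b2,b3] j) := by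
    intro i j hij
    fin_cases i <;> fin_cases j <;>
      first
      | exact absurd hij (by simp only [k23, SimpleGraph.fromRel_adj]; decide)
      | exact h11 | exact h12 | exact h13 | exact h21 | exact h22 | exact h23
      | exact h11.symm | exact h12.symm | exact h13.symm
      | exact h21.symm | exact h22.symm | exact h23.symm
  exact ⟨⟨![a1,a2,b1,b2,b3], fun {i j} => hmap i j⟩, hinj⟩

/-- `v0` is the hub, `v1 v2 v3` the branch vertices, `v4 ~ v1,v2`, `v5 ~ v2,v3`,
`v6 ~ v1,v3`. -/
lemma contains_sGraph {V : Type*} {G : SimpleGraph V} (v0 v1 v2 v3 v4 v5 v6 : V)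
    (e01 : G.Adj v0 v1) (e02 : G.Adj v0 v2) (e03 : G.Adj v0 v3)
    (e14 : G.Adj v1 v4) (e24 : G.Adj v2 v4) (e25 : G.Adj v2 v5)
    (e35 : G.Adj v3 v5) (e16 : G.Adj v1 v6) (e36 : G.Adj v3 v6)
    (n12 : v1 ≠ v2) (n13 : v1 ≠ v3) (n23 : v2 ≠ v3)
    (n04 : v0 ≠ v4) (n05 : v0 ≠ v5) (n06 : v0 ≠ v6)
    (n45 : v4 ≠ v5) (n46 : v4 ≠ v6) (n56 : v5 ≠ v6)
    (n15 : v1 ≠ v5) (n26 : v2 ≠ v6) (n34 : v3 ≠ v4) :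
    ContainsSubgraph G sGraph := by
  have a01 := e01.ne; have a02 := e02.ne; have a03 := e03.ne
  have a14 := e14.ne; have a24 := e24.ne; have a25 := e25.ne
  have a35 := e35.ne; have a16 := e16.ne; have a36 := e36.ne
  have hinj : Function.Injective ![v0,v1,v2,v3,v4,v5,v6] := by
    intro i j hij
    fin_cases i <;> fin_cases j <;>
      first
      | rfl
      | exact absurd hij a01 | exact absurd hij a02 | exact absurd hij a03
      | exact absurd hij a14 | exact absurd hij a24 | exact absurd hij a25
      | exact absurd hij a35 | exact absurd hij a16 | exact absurd hij a36
      | exact absurd hij n12 | exact absurd hij n13 | exact absurd hij n23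
      | exact absurd hij n04 | exact absurd hij n05 | exact absurd hij n06
      | exact absurd hij n45 | exact absurd hij n46 | exact absurd hij n56
      | exact absurd hij n15 | exact absurd hij n26 | exact absurd hij n34
      | exact absurd hij.symm a01 | exact absurd hij.symm a02 | exact absurd hij.symm a03
      | exact absurd hij.symm a14 | exact absurd hij.symm a24 | exact absurd hij.symm a25
      | exact absurd hij.symm a35 | exact absurd hij.symm a16 | exact absurd hij.symm a36
      | exact absurd hij.symm n12 | exact absurd hij.symm n13 | exact absurd hij.symm n23
      | exact absurd hij.symm n04 | exact absurd hij.symm n05 | exact absurd hij.symm n06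
      | exact absurd hij.symm n45 | exact absurd hij.symm n46 | exact absurd hij.symm n56
      | exact absurd hij.symm n15 | exact absurd hij.symm n26 | exact absurd hij.symm n34
  have hmap : ∀ i j : Fin 7, sGraph.Adj i j →
      G.Adj (![v0,v1,v2,v3,v4,v5,v6] i) (![v0,v1,v2,v3,v4,v5,v6] j) := by
    intro i j hij
    fin_cases i <;> fin_cases j <;>
      first
      | exact absurd hij (by simp only [sGraph, SimpleGraph.fromRel_adj]; decide)
      | exact e01 | exact e02 | exact e03 | exact e14 | exact e24 | exact e25
      | exact e35 | exact e16 | exact e36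
      | exact e01.symm | exact e02.symm | exact e03.symm | exact e14.symm
      | exact e24.symm | exact e25.symm | exact e35.symm | exact e16.symm | exact e36.symm
  exact ⟨⟨![v0,v1,v2,v3,v4,v5,v6], fun {i j} => hmap i j⟩, hinj⟩

lemma iso_cycle4 {V : Type*} [DecidableEq V] {G : SimpleGraph V}
    (a1 b1 a2 b2 : V)
    (huniv : ∀ v : V, v = a1 ∨ v = b1 ∨ v = a2 ∨ v = b2)
    (haa : a1 ≠ a2) (hbb : b1 ≠ b2)
    (e11 : G.Adj a1 b1) (e12 : G.Adj a1 b2) (e21 : G.Adj a2 b1) (e22 : G.Adj a2 b2)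
    (naa : ¬ G.Adj a1 a2) (nbb : ¬ G.Adj b1 b2) :
    Nonempty (G ≃g cycle4) := by
  have n11 := e11.ne; have n12 := e12.ne; have n21 := e21.ne; have n22 := e22.ne
  set f : V → Fin 4 := fun v =>
    if v = a1 then 0 else if v = b1 then 1 else if v = a2 then 2 else 3 with hf
  have hfa1 : f a1 = 0 := by simp [hf]
  have hfb1 : f b1 = 1 := by simp [hf, n11.symm]
  have hfa2 : f a2 = 2 := by simp [hf, haa.symm, n21]
  have hfb2 : f b2 = 3 := by simp [hf, n12.symm, hbb.symm, n22.symm]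
  set g : Fin 4 → V := ![a1, b1, a2, b2] with hg
  have hleft : Function.LeftInverse g f := by
    intro v
    rcases huniv v with rfl | rfl | rfl | rfl <;>
      simp only [hfa1, hfb1, hfa2, hfb2] <;> rfl
  have hright : Function.RightInverse g f := by
    intro i
    fin_cases i <;> first | exact hfa1 | exact hfb1 | exact hfa2 | exact hfb2
  refine ⟨⟨⟨f, g, hleft, hright⟩, ?_⟩⟩
  intro u v
  show cycle4.Adj (f u) (f v) ↔ G.Adj u v
  have la1 : ¬ G.Adj a1 a1 := G.loopless.irrefl a1
  have lb1 : ¬ G.Adj b1 b1 := G.loopless.irrefl b1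
  have la2 : ¬ G.Adj a2 a2 := G.loopless.irrefl a2
  have lb2 : ¬ G.Adj b2 b2 := G.loopless.irrefl b2
  have e11' := e11.symm; have e12' := e12.symm; have e21' := e21.symm; have e22' := e22.symm
  have naa' : ¬ G.Adj a2 a1 := fun h => naa h.symm
  have nbb' : ¬ G.Adj b2 b1 := fun h => nbb h.symm
  rcases huniv u with rfl | rfl | rfl | rfl <;> rcases huniv v with rfl | rfl | rfl | rfl <;>
    simp only [hfa1, hfb1, hfa2, hfb2] <;>
    first
    | exact iff_of_true (by simp only [cycle4, SimpleGraph.fromRel_adj]; decide) (by assumption)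
    | exact iff_of_false (by simp only [cycle4, SimpleGraph.fromRel_adj]; decide) (by assumption)

/-- Vertex map: `0↦a0, 1↦b1, 2↦a1, 3↦b0, 4↦a2, 5↦b2`.
Edges of the target: `a0b1, b1a1, a1b0, b0a2, a2b2, b2a0, a0b0`. -/
lemma iso_c6bar {V : Type*} [DecidableEq V] {G : SimpleGraph V}
    (a0 a1 a2 b0 b1 b2 : V)
    (huniv : ∀ v : V, v = a0 ∨ v = a1 ∨ v = a2 ∨ v = b0 ∨ v = b1 ∨ v = b2)
    (ha01 : a0 ≠ a1) (ha02 : a0 ≠ a2) (ha12 : a1 ≠ a2)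
    (hb01 : b0 ≠ b1) (hb02 : b0 ≠ b2) (hb12 : b1 ≠ b2)
    (nab1 : a1 ≠ b2) (nab2 : a2 ≠ b1)
    (e00 : G.Adj a0 b0) (e01 : G.Adj a0 b1) (e02 : G.Adj a0 b2)
    (e10 : G.Adj a1 b0) (e11 : G.Adj a1 b1)
    (e20 : G.Adj a2 b0) (e22 : G.Adj a2 b2)
    (x12 : ¬ G.Adj a1 b2) (x21 : ¬ G.Adj a2 b1)
    (y01 : ¬ G.Adj a0 a1) (y02 : ¬ G.Adj a0 a2) (y12 : ¬ G.Adj a1 a2)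
    (z01 : ¬ G.Adj b0 b1) (z02 : ¬ G.Adj b0 b2) (z12 : ¬ G.Adj b1 b2) :
    Nonempty (G ≃g c6bar) := by
  have n00 := e00.ne; have n01 := e01.ne; have n02 := e02.ne
  have n10 := e10.ne; have n11 := e11.ne
  have n20 := e20.ne; have n22 := e22.ne
  set f : V → Fin 6 := fun v =>
    if v = a0 then 0 else if v = b1 then 1 else if v = a1 then 2 else
    if v = b0 then 3 else if v = a2 then 4 else 5 with hf
  have hfa0 : f a0 = 0 := by simp [hf]
  have hfb1 : f b1 = 1 := by simp [hf, n01.symm]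
  have hfa1 : f a1 = 2 := by simp [hf, ha01.symm, n11]
  have hfb0 : f b0 = 3 := by simp [hf, n00.symm, hb01, n10.symm]
  have hfa2 : f a2 = 4 := by simp [hf, ha02.symm, nab2, ha12.symm, n20]
  have hfb2 : f b2 = 5 := by simp [hf, n02.symm, hb12.symm, nab1.symm, hb02.symm, n22.symm]
  set g : Fin 6 → V := ![a0, b1, a1, b0, a2, b2] with hg
  have hleft : Function.LeftInverse g f := by
    intro v
    rcases huniv v with rfl | rfl | rfl | rfl | rfl | rfl <;>
      simp only [hfa0, hfb1, hfa1, hfb0, hfa2, hfb2] <;> rfl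
  have hright : Function.RightInverse g f := by
    intro i
    fin_cases i <;>
      first | exact hfa0 | exact hfb1 | exact hfa1 | exact hfb0 | exact hfa2 | exact hfb2
  refine ⟨⟨⟨f, g, hleft, hright⟩, ?_⟩⟩
  intro u v
  show c6bar.Adj (f u) (f v) ↔ G.Adj u v
  have l0 : ¬ G.Adj a0 a0 := G.loopless.irrefl a0
  have l1 : ¬ G.Adj a1 a1 := G.loopless.irrefl a1
  have l2 : ¬ G.Adj a2 a2 := G.loopless.irrefl a2
  have l3 : ¬ G.Adj b0 b0 := G.loopless.irrefl b0
  have l4 : ¬ G.Adj b1 b1 := G.loopless.irrefl b1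
  have l5 : ¬ G.Adj b2 b2 := G.loopless.irrefl b2
  have e00' := e00.symm; have e01' := e01.symm; have e02' := e02.symm
  have e10' := e10.symm; have e11' := e11.symm
  have e20' := e20.symm; have e22' := e22.symm
  have x12' : ¬ G.Adj b2 a1 := fun h => x12 h.symm
  have x21' : ¬ G.Adj b1 a2 := fun h => x21 h.symm
  have y01' : ¬ G.Adj a1 a0 := fun h => y01 h.symm
  have y02' : ¬ G.Adj a2 a0 := fun h => y02 h.symm
  have y12' : ¬ G.Adj a2 a1 := fun h => y12 h.symm
  have z01' : ¬ G.Adj b1 b0 := fun h => z01 h.symm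
  have z02' : ¬ G.Adj b2 b0 := fun h => z02 h.symm
  have z12' : ¬ G.Adj b2 b1 := fun h => z12 h.symm
  rcases huniv u with rfl | rfl | rfl | rfl | rfl | rfl <;>
    rcases huniv v with rfl | rfl | rfl | rfl | rfl | rfl <;>
    simp only [hfa0, hfb1, hfa1, hfb0, hfa2, hfb2] <;>
    first
    | exact iff_of_true (by simp only [c6bar, SimpleGraph.fromRel_adj]; decide) (by assumption)
    | exact iff_of_false (by simp only [c6bar, SimpleGraph.fromRel_adj]; decide) (by assumption)

section Core

variable {V : Type*} [Fintype V] [DecidableEq V] (G : SimpleGraph V) [DecidableRel G.Adj]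

lemma side2_config (SA SB : Finset V)
    (hmin : ∀ v, 2 ≤ G.degree v)
    (hnb : ∀ b ∈ SB, G.neighborFinset b ⊆ SA)
    (h2 : SA.card = 2) (h3 : 3 ≤ SB.card) :
    ContainsSubgraph G k23 := by
  obtain ⟨a1, a2, ha, hSA⟩ := Finset.card_eq_two.mp h2
  obtain ⟨t, htsub, ht3⟩ := Finset.exists_subset_card_eq h3
  obtain ⟨b1, b2, b3, h12, h13, h23, ht⟩ := Finset.card_eq_three.mp ht3
  have key : ∀ b ∈ SB, G.neighborFinset b = SA := by
    intro b hb
    apply Finset.eq_of_subset_of_card_le (hnb b hb)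
    rw [h2]
    exact hmin b
  have adj : ∀ b ∈ SB, G.Adj a1 b ∧ G.Adj a2 b := by
    intro b hb
    constructor
    · have : a1 ∈ G.neighborFinset b := by rw [key b hb, hSA]; simp
      exact ((SimpleGraph.mem_neighborFinset _ _ _).mp this).symm
    · have : a2 ∈ G.neighborFinset b := by rw [key b hb, hSA]; simp
      exact ((SimpleGraph.mem_neighborFinset _ _ _).mp this).symm
  have hb1 : b1 ∈ SB := htsub (by rw [ht]; simp)
  have hb2 : b2 ∈ SB := htsub (by rw [ht]; simp)
  have hb3 : b3 ∈ SB := htsub (by rw [ht]; simp)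
  exact contains_k23 a1 a2 b1 b2 b3 ha h12 h13 h23
    (adj b1 hb1).1 (adj b2 hb2).1 (adj b3 hb3).1
    (adj b1 hb1).2 (adj b2 hb2).2 (adj b3 hb3).2

lemma no_all_deg2 (SA SB : Finset V)
    (hmin : ∀ v, 2 ≤ G.degree v)
    (h4cyc : ∀ v, G.degree v = 2 → ∃ c : G.Walk v v, c.IsCycle ∧ c.length = 4)
    (hpart : ∀ v, v ∈ SB ↔ v ∉ SA)
    (hcross : ∀ u v, G.Adj u v → (u ∈ SA ↔ v ∈ SB))
    (hA3 : SA.card = 3) (hB3 : SB.card = 3)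
    (hall : ∀ a ∈ SA, G.degree a = 2) : False := by
  have nbB : ∀ b ∈ SB, G.neighborFinset b ⊆ SA := by
    intro b hb c hc
    rw [SimpleGraph.mem_neighborFinset] at hc
    have h1 := hcross b c hc
    have hbA : b ∉ SA := (hpart b).mp hb
    have : c ∉ SB := fun hcB => hbA (h1.mpr hcB)
    exact not_not.mp (fun hcA => this ((hpart c).mpr hcA))
  obtain ⟨a1, ha1⟩ := Finset.card_pos.mp (by omega : 0 < SA.card)
  obtain ⟨c, hc, hlen⟩ := h4cyc a1 (hall a1 ha1)
  obtain ⟨x, y, z, hax, hxy, hyz, hza, hxyne, hxz, hxa, hyzne, hya, hza'⟩ :=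
    cycle4_struct c hc hlen
  have hxN : x ∈ G.neighborFinset a1 := (SimpleGraph.mem_neighborFinset _ _ _).mpr hax
  have hzN : z ∈ G.neighborFinset a1 := (SimpleGraph.mem_neighborFinset _ _ _).mpr hza.symm
  have hNa1 : G.neighborFinset a1 = {x, z} := by
    have hsub : ({x, z} : Finset V) ⊆ G.neighborFinset a1 := by
      intro w hw; rcases Finset.mem_insert.mp hw with rfl | hw
      · exact hxN
      · rw [Finset.mem_singleton.mp hw]; exact hzN
    have hcard2 : ({x, z} : Finset V).card = 2 := by
      rw [Finset.card_insert_of_notMem (by simpa using hxz), Finset.card_singleton]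
    refine (Finset.eq_of_subset_of_card_le hsub ?_).symm
    have : (G.neighborFinset a1).card = 2 := hall a1 ha1
    omega
  have hxB : x ∈ SB := (hcross a1 x hax).mp ha1
  have hzB : z ∈ SB := (hcross a1 z hza.symm).mp ha1
  have hyA : y ∈ SA := by
    have h1 := hcross x y hxy
    have : x ∉ SA := (hpart x).mp hxB
    have hynB : y ∉ SB := fun hyB => this (h1.mpr hyB)
    exact not_not.mp (fun h => hynB ((hpart y).mpr h))
  have hNy : G.neighborFinset y = {x, z} := by
    have hsub : ({x, z} : Finset V) ⊆ G.neighborFinset y := by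
      intro w hw; rcases Finset.mem_insert.mp hw with rfl | hw
      · exact (SimpleGraph.mem_neighborFinset _ _ _).mpr hxy.symm
      · rw [Finset.mem_singleton.mp hw]
        exact (SimpleGraph.mem_neighborFinset _ _ _).mpr hyz
    have hcard2 : ({x, z} : Finset V).card = 2 := by
      rw [Finset.card_insert_of_notMem (by simpa using hxz), Finset.card_singleton]
    refine (Finset.eq_of_subset_of_card_le hsub ?_).symm
    have : (G.neighborFinset y).card = 2 := hall y hyA
    omega
  have hxzsub : ({x, z} : Finset V) ⊆ SB := by
    intro w hw; rcases Finset.mem_insert.mp hw with rfl | hw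
    · exact hxB
    · rw [Finset.mem_singleton.mp hw]; exact hzB
  have hcard2 : ({x, z} : Finset V).card = 2 := by
    rw [Finset.card_insert_of_notMem (by simpa using hxz), Finset.card_singleton]
  have hsd : (SB \ {x, z}).card = 1 := by
    rw [Finset.card_sdiff_of_subset hxzsub]; omega
  obtain ⟨b3, hb3⟩ := Finset.card_eq_one.mp hsd
  have hb3mem : b3 ∈ SB \ ({x, z} : Finset V) := by rw [hb3]; simp
  have hb3B : b3 ∈ SB := (Finset.mem_sdiff.mp hb3mem).1
  have hb3x : b3 ≠ x := by
    intro h; exact (Finset.mem_sdiff.mp hb3mem).2 (by rw [h]; simp)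
  have hb3z : b3 ≠ z := by
    intro h; exact (Finset.mem_sdiff.mp hb3mem).2 (by rw [h]; simp)
  have hsub : G.neighborFinset b3 ⊆ (SA.erase a1).erase y := by
    intro w hw
    have hwA : w ∈ SA := nbB b3 hb3B hw
    rw [SimpleGraph.mem_neighborFinset] at hw
    have hwa1 : w ≠ a1 := by
      intro h
      have hadj : G.Adj a1 b3 := by rw [h] at hw; exact hw.symm
      have : b3 ∈ G.neighborFinset a1 := (SimpleGraph.mem_neighborFinset _ _ _).mpr hadj
      rw [hNa1] at this
      rcases Finset.mem_insert.mp this with h | h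
      · exact hb3x h
      · exact hb3z (Finset.mem_singleton.mp h)
    have hwy : w ≠ y := by
      intro h
      have hadj : G.Adj y b3 := by rw [h] at hw; exact hw.symm
      have : b3 ∈ G.neighborFinset y := (SimpleGraph.mem_neighborFinset _ _ _).mpr hadj
      rw [hNy] at this
      rcases Finset.mem_insert.mp this with h | h
      · exact hb3x h
      · exact hb3z (Finset.mem_singleton.mp h)
    exact Finset.mem_erase.mpr ⟨hwy, Finset.mem_erase.mpr ⟨hwa1, hwA⟩⟩
  have hyane : y ∈ SA.erase a1 := Finset.mem_erase.mpr ⟨hya, hyA⟩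
  have hle : ((SA.erase a1).erase y).card = 1 := by
    rw [Finset.card_erase_of_mem hyane, Finset.card_erase_of_mem ha1]
    omega
  have := Finset.card_le_card hsub
  have hdb3 : 2 ≤ (G.neighborFinset b3).card := hmin b3
  omega


lemma side34_false (SA SB : Finset V)
    (hmin : ∀ v, 2 ≤ G.degree v) (hmax : ∀ v, G.degree v ≤ 3)
    (h4cyc : ∀ v, G.degree v = 2 → ∃ c : G.Walk v v, c.IsCycle ∧ c.length = 4)
    (hK23 : ¬ ContainsSubgraph G k23) (hS : ¬ ContainsSubgraph G sGraph)
    (hpart : ∀ v, v ∈ SB ↔ v ∉ SA)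
    (hcross : ∀ u v, G.Adj u v → (u ∈ SA ↔ v ∈ SB))
    (hA3 : SA.card = 3) (hB4 : SB.card = 4) : False := by
  have nbA : ∀ a ∈ SA, G.neighborFinset a ⊆ SB := by
    intro a ha b hb
    rw [SimpleGraph.mem_neighborFinset] at hb
    exact (hcross a b hb).mp ha
  have nbB : ∀ b ∈ SB, G.neighborFinset b ⊆ SA := by
    intro b hb c hc
    rw [SimpleGraph.mem_neighborFinset] at hc
    have h1 := hcross b c hc
    have hbA : b ∉ SA := (hpart b).mp hb
    have : c ∉ SB := fun hcB => hbA (h1.mpr hcB)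
    exact not_not.mp (fun hcA => this ((hpart c).mpr hcA))
  have hABne : ∀ a ∈ SA, ∀ b ∈ SB, a ≠ b := by
    rintro a ha b hb rfl
    exact (hpart a).mp hb ha
  by_cases hall : ∀ a ∈ SA, G.degree a = 3
  · -- all three A-vertices have degree 3: extract an S subgraph
    obtain ⟨a1, a2, a3, h12, h13, h23, hSA⟩ := Finset.card_eq_three.mp hA3
    have ha1 : a1 ∈ SA := by rw [hSA]; simp
    have ha2 : a2 ∈ SA := by rw [hSA]; simp
    have ha3 : a3 ∈ SA := by rw [hSA]; simp
    have getmiss : ∀ a ∈ SA, ∃ c, SB \ G.neighborFinset a = {c} := by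
      intro a ha
      apply Finset.card_eq_one.mp
      rw [Finset.card_sdiff_of_subset (nbA a ha)]
      have : (G.neighborFinset a).card = 3 := hall a ha
      omega
    obtain ⟨c1, hc1⟩ := getmiss a1 ha1
    obtain ⟨c2, hc2⟩ := getmiss a2 ha2
    obtain ⟨c3, hc3⟩ := getmiss a3 ha3
    have cmem : ∀ (a c : V), a ∈ SA → SB \ G.neighborFinset a = {c} → c ∈ SB := by
      intro a c ha hc
      have : c ∈ SB \ G.neighborFinset a := by rw [hc]; simp
      exact (Finset.mem_sdiff.mp this).1
    have hc1B := cmem a1 c1 ha1 hc1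
    have hc2B := cmem a2 c2 ha2 hc2
    have hc3B := cmem a3 c3 ha3 hc3
    -- adjacency to everything in SB except the missing vertex
    have adjall : ∀ (a c : V), a ∈ SA → SB \ G.neighborFinset a = {c} →
        ∀ b ∈ SB, b ≠ c → G.Adj a b := by
      intro a c ha hc b hb hbc
      by_contra hnadj
      have : b ∈ SB \ G.neighborFinset a := by
        rw [Finset.mem_sdiff, SimpleGraph.mem_neighborFinset]
        exact ⟨hb, hnadj⟩
      rw [hc] at this
      exact hbc (Finset.mem_singleton.mp this)
    -- the missing vertices are pairwise distinct, else K23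
    have cdist : ∀ (a a' c : V), a ∈ SA → a' ∈ SA → a ≠ a' →
        SB \ G.neighborFinset a = {c} → SB \ G.neighborFinset a' = {c} → False := by
      intro a a' c ha ha' hne hc hc'
      have hN : G.neighborFinset a = G.neighborFinset a' := by
        have e1 : G.neighborFinset a = SB \ {c} := by
          rw [← hc, Finset.sdiff_sdiff_eq_self (nbA a ha)]
        have e2 : G.neighborFinset a' = SB \ {c} := by
          rw [← hc', Finset.sdiff_sdiff_eq_self (nbA a' ha')]
        rw [e1, e2]
      have hcard : (G.neighborFinset a).card = 3 := hall a ha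
      obtain ⟨e1, e2, e3, he12, he13, he23, hNe⟩ := Finset.card_eq_three.mp hcard
      have adj1 : ∀ w ∈ G.neighborFinset a, G.Adj a w := by
        intro w hw; exact (SimpleGraph.mem_neighborFinset _ _ _).mp hw
      have adj2 : ∀ w ∈ G.neighborFinset a, G.Adj a' w := by
        intro w hw; rw [hN] at hw; exact (SimpleGraph.mem_neighborFinset _ _ _).mp hw
      have m1 : e1 ∈ G.neighborFinset a := by rw [hNe]; simp
      have m2 : e2 ∈ G.neighborFinset a := by rw [hNe]; simp
      have m3 : e3 ∈ G.neighborFinset a := by rw [hNe]; simp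
      exact hK23 (contains_k23 a a' e1 e2 e3 hne he12 he13 he23
        (adj1 e1 m1) (adj1 e2 m2) (adj1 e3 m3) (adj2 e1 m1) (adj2 e2 m2) (adj2 e3 m3))
    have hc12 : c1 ≠ c2 := fun h => cdist a1 a2 c1 ha1 ha2 h12 hc1 (h ▸ hc2)
    have hc13 : c1 ≠ c3 := fun h => cdist a1 a3 c1 ha1 ha3 h13 hc1 (h ▸ hc3)
    have hc23 : c2 ≠ c3 := fun h => cdist a2 a3 c2 ha2 ha3 h23 hc2 (h ▸ hc3)
    -- the fourth vertex of SB
    have hcsub : ({c1, c2, c3} : Finset V) ⊆ SB := by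
      intro w hw
      rcases Finset.mem_insert.mp hw with rfl | hw
      · exact hc1B
      rcases Finset.mem_insert.mp hw with rfl | hw
      · exact hc2B
      · rw [Finset.mem_singleton.mp hw]; exact hc3B
    have hccard : ({c1, c2, c3} : Finset V).card = 3 := by
      rw [Finset.card_insert_of_notMem (by simp [hc12, hc13]),
        Finset.card_insert_of_notMem (by simpa using hc23), Finset.card_singleton]
    have hb0card : (SB \ {c1, c2, c3}).card = 1 := by
      rw [Finset.card_sdiff_of_subset hcsub]; omega
    obtain ⟨b0, hb0⟩ := Finset.card_eq_one.mp hb0card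
    have hb0mem : b0 ∈ SB \ ({c1, c2, c3} : Finset V) := by rw [hb0]; simp
    have hb0B : b0 ∈ SB := (Finset.mem_sdiff.mp hb0mem).1
    have hb0c1 : b0 ≠ c1 := fun h => (Finset.mem_sdiff.mp hb0mem).2 (by rw [h]; simp)
    have hb0c2 : b0 ≠ c2 := fun h => (Finset.mem_sdiff.mp hb0mem).2 (by rw [h]; simp)
    have hb0c3 : b0 ≠ c3 := fun h => (Finset.mem_sdiff.mp hb0mem).2 (by rw [h]; simp)
    -- build the S configuration
    apply hS
    exact contains_sGraph b0 a1 a2 a3 c3 c1 c2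
      (adjall a1 c1 ha1 hc1 b0 hb0B hb0c1).symm
      (adjall a2 c2 ha2 hc2 b0 hb0B hb0c2).symm
      (adjall a3 c3 ha3 hc3 b0 hb0B hb0c3).symm
      (adjall a1 c1 ha1 hc1 c3 hc3B hc13.symm)
      (adjall a2 c2 ha2 hc2 c3 hc3B hc23.symm)
      (adjall a2 c2 ha2 hc2 c1 hc1B hc12)
      (adjall a3 c3 ha3 hc3 c1 hc1B hc13)
      (adjall a1 c1 ha1 hc1 c2 hc2B hc12.symm)
      (adjall a3 c3 ha3 hc3 c2 hc2B hc23)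
      h12 h13 h23 hb0c3 hb0c1 hb0c2
      hc13.symm hc23.symm hc12
      (hABne a1 ha1 c1 hc1B) (hABne a2 ha2 c2 hc2B) (hABne a3 ha3 c3 hc3B)
  · -- some A-vertex has degree 2
    push_neg at hall
    obtain ⟨a3, ha3, hd3'⟩ := hall
    have hd3 : G.degree a3 = 2 := by
      have := hmin a3; have := hmax a3; omega
    obtain ⟨a1, a2, h12, hSAea⟩ := Finset.card_eq_two.mp
      (by rw [Finset.card_erase_of_mem ha3, hA3] : (SA.erase a3).card = 2)
    have ha1e : a1 ∈ SA.erase a3 := by rw [hSAea]; simp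
    have ha2e : a2 ∈ SA.erase a3 := by rw [hSAea]; simp
    have ha1 : a1 ∈ SA := Finset.mem_of_mem_erase ha1e
    have ha2 : a2 ∈ SA := Finset.mem_of_mem_erase ha2e
    have h13 : a1 ≠ a3 := (Finset.mem_erase.mp ha1e).1
    have h23 : a2 ≠ a3 := (Finset.mem_erase.mp ha2e).1
    -- the two vertices of SB not adjacent to a3
    have hNa3card : (G.neighborFinset a3).card = 2 := hd3
    have hTcard : (SB \ G.neighborFinset a3).card = 2 := by
      rw [Finset.card_sdiff_of_subset (nbA a3 ha3)]; omega
    obtain ⟨b1, b2, hb12, hT⟩ := Finset.card_eq_two.mp hTcard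
    have hb1T : b1 ∈ SB \ G.neighborFinset a3 := by rw [hT]; simp
    have hb2T : b2 ∈ SB \ G.neighborFinset a3 := by rw [hT]; simp
    have hb1B : b1 ∈ SB := (Finset.mem_sdiff.mp hb1T).1
    have hb2B : b2 ∈ SB := (Finset.mem_sdiff.mp hb2T).1
    -- each of b1, b2 is adjacent to both a1 and a2
    have hTadj : ∀ b, b ∈ SB \ G.neighborFinset a3 → G.Adj b a1 ∧ G.Adj b a2 := by
      intro b hb
      have hbB : b ∈ SB := (Finset.mem_sdiff.mp hb).1
      have hbn3 : b ∉ G.neighborFinset a3 := (Finset.mem_sdiff.mp hb).2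
      have hsub : G.neighborFinset b ⊆ SA.erase a3 := by
        intro w hw
        have hwA : w ∈ SA := nbB b hbB hw
        rw [SimpleGraph.mem_neighborFinset] at hw
        refine Finset.mem_erase.mpr ⟨?_, hwA⟩
        intro h
        apply hbn3
        rw [SimpleGraph.mem_neighborFinset]
        rw [h] at hw
        exact hw.symm
      have heq : G.neighborFinset b = SA.erase a3 := by
        apply Finset.eq_of_subset_of_card_le hsub
        rw [Finset.card_erase_of_mem ha3, hA3]
        exact hmin b
      constructor
      · have : a1 ∈ G.neighborFinset b := by rw [heq]; exact ha1e
        exact (SimpleGraph.mem_neighborFinset _ _ _).mp this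
      · have : a2 ∈ G.neighborFinset b := by rw [heq]; exact ha2e
        exact (SimpleGraph.mem_neighborFinset _ _ _).mp this
    -- the two neighbours of a3
    obtain ⟨b3, b4, hb34, hN3⟩ := Finset.card_eq_two.mp hNa3card
    have hb3N : b3 ∈ G.neighborFinset a3 := by rw [hN3]; simp
    have hb4N : b4 ∈ G.neighborFinset a3 := by rw [hN3]; simp
    -- the 4-cycle through a3
    obtain ⟨c, hcyc, hlen⟩ := h4cyc a3 hd3
    obtain ⟨x, y, z, hax, hxy, hyz, hza, hxyne, hxz, hxa, hyzne, hya, hza'⟩ :=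
      cycle4_struct c hcyc hlen
    have hxN : x ∈ G.neighborFinset a3 := (SimpleGraph.mem_neighborFinset _ _ _).mpr hax
    have hzN : z ∈ G.neighborFinset a3 := (SimpleGraph.mem_neighborFinset _ _ _).mpr hza.symm
    -- y is adjacent to both b3 and b4
    have hyb34 : G.Adj y b3 ∧ G.Adj y b4 := by
      rw [hN3] at hxN hzN
      have hx34 : x = b3 ∨ x = b4 := by
        rcases Finset.mem_insert.mp hxN with h | h
        · exact Or.inl h
        · exact Or.inr (Finset.mem_singleton.mp h)
      have hz34 : z = b3 ∨ z = b4 := by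
        rcases Finset.mem_insert.mp hzN with h | h
        · exact Or.inl h
        · exact Or.inr (Finset.mem_singleton.mp h)
      have hAyx : G.Adj y x := hxy.symm
      have hAyz : G.Adj y z := hyz
      rcases hx34 with hx | hx <;> rcases hz34 with hz | hz
      · exact absurd (hx.trans hz.symm) hxz
      · exact ⟨hx ▸ hAyx, hz ▸ hAyz⟩
      · exact ⟨hz ▸ hAyz, hx ▸ hAyx⟩
      · exact absurd (hx.trans hz.symm) hxz
    -- y lies in SA, distinct from a3
    have hxB : x ∈ SB := nbA a3 ha3 hxN
    have hyA : y ∈ SA := by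
      have h1 := hcross x y hxy
      have : x ∉ SA := (hpart x).mp hxB
      have hynB : y ∉ SB := fun hyB => this (h1.mpr hyB)
      exact not_not.mp (fun h => hynB ((hpart y).mpr h))
    have hye : y ∈ SA.erase a3 := Finset.mem_erase.mpr ⟨hya, hyA⟩
    -- y is adjacent to b1 and b2 as well
    have hyb1 : G.Adj y b1 := by
      rw [hSAea] at hye
      rcases Finset.mem_insert.mp hye with rfl | h
      · exact (hTadj b1 hb1T).1.symm
      · rw [Finset.mem_singleton.mp h]; exact (hTadj b1 hb1T).2.symm
    have hyb2 : G.Adj y b2 := by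
      rw [hSAea] at hye
      rcases Finset.mem_insert.mp hye with rfl | h
      · exact (hTadj b2 hb2T).1.symm
      · rw [Finset.mem_singleton.mp h]; exact (hTadj b2 hb2T).2.symm
    -- b1, b2, b3, b4 are four distinct neighbours of y: contradiction with max degree 3
    have hb3B' : b3 ∈ SB := nbA a3 ha3 hb3N
    have hb13 : b1 ≠ b3 := by
      rintro rfl; exact (Finset.mem_sdiff.mp hb1T).2 hb3N
    have hb14 : b1 ≠ b4 := by
      rintro rfl; exact (Finset.mem_sdiff.mp hb1T).2 hb4N
    have hb23' : b2 ≠ b3 := by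
      rintro rfl; exact (Finset.mem_sdiff.mp hb2T).2 hb3N
    have hb24 : b2 ≠ b4 := by
      rintro rfl; exact (Finset.mem_sdiff.mp hb2T).2 hb4N
    have hsub4 : ({b1, b2, b3, b4} : Finset V) ⊆ G.neighborFinset y := by
      intro w hw
      rw [SimpleGraph.mem_neighborFinset]
      rcases Finset.mem_insert.mp hw with rfl | hw
      · exact hyb1
      rcases Finset.mem_insert.mp hw with rfl | hw
      · exact hyb2
      rcases Finset.mem_insert.mp hw with rfl | hw
      · exact hyb34.1
      · rw [Finset.mem_singleton.mp hw]; exact hyb34.2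
    have hcard4 : ({b1, b2, b3, b4} : Finset V).card = 4 := by
      rw [Finset.card_insert_of_notMem (by simp [hb12, hb13, hb14]),
        Finset.card_insert_of_notMem (by simp [hb23', hb24]),
        Finset.card_insert_of_notMem (by simpa using hb34), Finset.card_singleton]
    have := Finset.card_le_card hsub4
    have := hmax y
    have : (G.neighborFinset y).card ≤ 3 := hmax y
    omega

end Core

/-- A finite connected bipartite simple graph on at most 7 vertices, with minimum degree at
least 2 and maximum degree at most 3, containing no `K_{2,3}` and no `S` as a subgraph, and
in which every degree-2 vertex lies on a 4-cycle, is isomorphic to `C4` or to `C̄6`. -/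
theorem core_is_c4_or_c6bar {V : Type*} [Fintype V] [DecidableEq V]
    (G : SimpleGraph V) [DecidableRel G.Adj]
    (hconn : G.Connected) (hbip : IsBipartite G)
    (hcard : Fintype.card V ≤ 7)
    (hmin : ∀ v, 2 ≤ G.degree v) (hmax : ∀ v, G.degree v ≤ 3)
    (hK23 : ¬ ContainsSubgraph G k23)
    (hS : ¬ ContainsSubgraph G sGraph)
    (h4cyc : ∀ v, G.degree v = 2 → ∃ c : G.Walk v v, c.IsCycle ∧ c.length = 4) :
    Nonempty (G ≃g cycle4) ∨ Nonempty (G ≃g c6bar) := by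
  classical
  obtain ⟨A, hA⟩ := hbip
  set SA : Finset V := Finset.univ.filter (fun v => v ∈ A) with hSAdef
  set SB : Finset V := Finset.univ.filter (fun v => v ∉ A) with hSBdef
  have hmemA : ∀ v, v ∈ SA ↔ v ∈ A := by intro v; simp [hSAdef]
  have hmemB : ∀ v, v ∈ SB ↔ v ∉ A := by intro v; simp [hSBdef]
  have hpart : ∀ v, v ∈ SB ↔ v ∉ SA := by
    intro v; rw [hmemB, hmemA]
  have hpart' : ∀ v, v ∈ SA ↔ v ∉ SB := by
    intro v; rw [hmemB, hmemA]; tauto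
  have hcross : ∀ u v, G.Adj u v → (u ∈ SA ↔ v ∈ SB) := by
    intro u v h; rw [hmemA, hmemB]; exact hA u v h
  have hcross' : ∀ u v, G.Adj u v → (u ∈ SB ↔ v ∈ SA) := by
    intro u v h; exact (hcross v u h.symm).symm
  have nbA : ∀ a ∈ SA, G.neighborFinset a ⊆ SB := by
    intro a ha b hb
    rw [SimpleGraph.mem_neighborFinset] at hb
    exact (hcross a b hb).mp ha
  have nbB : ∀ b ∈ SB, G.neighborFinset b ⊆ SA := by
    intro b hb c hc
    rw [SimpleGraph.mem_neighborFinset] at hc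
    exact (hcross' b c hc).mp hb
  have noadjA : ∀ u ∈ SA, ∀ v ∈ SA, ¬ G.Adj u v := by
    intro u hu v hv h
    exact (hpart v).mp ((hcross u v h).mp hu) hv
  have noadjB : ∀ u ∈ SB, ∀ v ∈ SB, ¬ G.Adj u v := by
    intro u hu v hv h
    exact (hpart v).mp hv ((hcross' u v h).mp hu)
  have hdeg : ∀ v, (G.neighborFinset v).card = G.degree v := fun v => rfl
  have hsum : SA.card + SB.card = Fintype.card V := by
    rw [hSAdef, hSBdef, ← Finset.card_univ]
    exact Finset.card_filter_add_card_filter_not _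
  -- both sides have at least two vertices
  obtain ⟨v0⟩ := hconn.nonempty
  have step : ∀ w, w ∈ SA → 2 ≤ SB.card ∧ 2 ≤ SA.card := by
    intro w hw
    have h1 : 2 ≤ SB.card :=
      le_trans (hmin w) (Finset.card_le_card (nbA w hw))
    obtain ⟨b, hb⟩ := Finset.card_pos.mp (lt_of_lt_of_le (by norm_num) (hmin w) :
      0 < (G.neighborFinset w).card)
    have hbB : b ∈ SB := nbA w hw hb
    have h2 : 2 ≤ SA.card :=
      le_trans (hmin b) (Finset.card_le_card (nbB b hbB))
    exact ⟨h1, h2⟩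
  have stepB : ∀ w, w ∈ SB → 2 ≤ SB.card ∧ 2 ≤ SA.card := by
    intro w hw
    have h1 : 2 ≤ SA.card :=
      le_trans (hmin w) (Finset.card_le_card (nbB w hw))
    obtain ⟨a, ha⟩ := Finset.card_pos.mp (lt_of_lt_of_le (by norm_num) (hmin w) :
      0 < (G.neighborFinset w).card)
    have haA : a ∈ SA := nbB w hw ha
    have h2 : 2 ≤ SB.card :=
      le_trans (hmin a) (Finset.card_le_card (nbA a haA))
    exact ⟨h2, h1⟩
  have hBoth : 2 ≤ SA.card ∧ 2 ≤ SB.card := by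
    by_cases hv : v0 ∈ SA
    · exact ⟨(step v0 hv).2, (step v0 hv).1⟩
    · have : v0 ∈ SB := (hpart v0).mpr hv
      exact ⟨(stepB v0 this).2, (stepB v0 this).1⟩
  have hn23 : ¬ (SA.card = 2 ∧ 3 ≤ SB.card) := by
    rintro ⟨h2, h3⟩
    exact hK23 (side2_config G SA SB hmin nbB h2 h3)
  have hn32 : ¬ (SB.card = 2 ∧ 3 ≤ SA.card) := by
    rintro ⟨h2, h3⟩
    exact hK23 (side2_config G SB SA hmin nbA h2 h3)
  have hle7 : SA.card + SB.card ≤ 7 := by omega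
  have h2or : SA.card = 2 ∨ 3 ≤ SA.card := by omega
  rcases h2or with h2 | h3
  · -- |SA| = 2, so |SB| = 2 : the graph is C4
    have hB2 : SB.card = 2 := by
      by_contra h
      exact hn23 ⟨h2, by omega⟩
    obtain ⟨a1, a2, ha12, hSAeq⟩ := Finset.card_eq_two.mp h2
    obtain ⟨b1, b2, hb12, hSBeq⟩ := Finset.card_eq_two.mp hB2
    have ha1 : a1 ∈ SA := by rw [hSAeq]; simp
    have ha2 : a2 ∈ SA := by rw [hSAeq]; simp
    have hb1 : b1 ∈ SB := by rw [hSBeq]; simp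
    have hb2 : b2 ∈ SB := by rw [hSBeq]; simp
    have hNfull : ∀ a ∈ SA, G.neighborFinset a = SB := by
      intro a ha
      apply Finset.eq_of_subset_of_card_le (nbA a ha)
      rw [hB2]; exact hmin a
    have adj : ∀ a ∈ SA, ∀ b ∈ SB, G.Adj a b := by
      intro a ha b hb
      have : b ∈ G.neighborFinset a := by rw [hNfull a ha]; exact hb
      exact (SimpleGraph.mem_neighborFinset _ _ _).mp this
    have huniv : ∀ v : V, v = a1 ∨ v = b1 ∨ v = a2 ∨ v = b2 := by
      intro v
      by_cases hv : v ∈ SA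
      · rw [hSAeq] at hv
        rcases Finset.mem_insert.mp hv with h | h
        · exact Or.inl h
        · exact Or.inr (Or.inr (Or.inl (Finset.mem_singleton.mp h)))
      · have : v ∈ SB := (hpart v).mpr hv
        rw [hSBeq] at this
        rcases Finset.mem_insert.mp this with h | h
        · exact Or.inr (Or.inl h)
        · exact Or.inr (Or.inr (Or.inr (Finset.mem_singleton.mp h)))
    exact Or.inl (iso_cycle4 a1 b1 a2 b2 huniv ha12 hb12
      (adj a1 ha1 b1 hb1) (adj a1 ha1 b2 hb2) (adj a2 ha2 b1 hb1) (adj a2 ha2 b2 hb2)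
      (noadjA a1 ha1 a2 ha2) (noadjB b1 hb1 b2 hb2))
  · -- |SA| ≥ 3, so |SB| ≥ 3
    have hB3' : 3 ≤ SB.card := by
      by_contra h
      exact hn32 ⟨by omega, h3⟩
    have hcases : (SA.card = 3 ∧ SB.card = 3) ∨ (SA.card = 3 ∧ SB.card = 4) ∨
        (SA.card = 4 ∧ SB.card = 3) := by omega
    rcases hcases with ⟨hA3, hB3⟩ | ⟨hA3, hB4⟩ | ⟨hA4, hB3⟩
    · -- the (3,3) case : the graph is C̄6
      right
      -- a vertex of degree 3 on each side
      have hex3A : ∃ a ∈ SA, G.degree a = 3 := by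
        by_contra h
        push_neg at h
        exact no_all_deg2 G SA SB hmin h4cyc hpart hcross hA3 hB3
          (fun a ha => by have := hmin a; have := hmax a; have := h a ha; omega)
      have hex3B : ∃ b ∈ SB, G.degree b = 3 := by
        by_contra h
        push_neg at h
        exact no_all_deg2 G SB SA hmin h4cyc hpart' hcross' hB3 hA3
          (fun b hb => by have := hmin b; have := hmax b; have := h b hb; omega)
      obtain ⟨a0, ha0, hda0⟩ := hex3A
      obtain ⟨b0, hb0, hdb0⟩ := hex3B
      have hNa0 : G.neighborFinset a0 = SB := by
        apply Finset.eq_of_subset_of_card_le (nbA a0 ha0)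
        rw [hB3, hdeg a0, hda0]
      have hNb0 : G.neighborFinset b0 = SA := by
        apply Finset.eq_of_subset_of_card_le (nbB b0 hb0)
        rw [hA3, hdeg b0, hdb0]
      have adja0 : ∀ b ∈ SB, G.Adj a0 b := by
        intro b hb
        have : b ∈ G.neighborFinset a0 := by rw [hNa0]; exact hb
        exact (SimpleGraph.mem_neighborFinset _ _ _).mp this
      have adjb0 : ∀ a ∈ SA, G.Adj b0 a := by
        intro a ha
        have : a ∈ G.neighborFinset b0 := by rw [hNb0]; exact ha
        exact (SimpleGraph.mem_neighborFinset _ _ _).mp this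
      -- uniqueness of the degree-3 vertex on each side
      have uniqA : ∀ a ∈ SA, a ≠ a0 → G.degree a = 2 := by
        intro a ha hne
        by_contra h
        have hd3 : G.degree a = 3 := by have := hmin a; have := hmax a; omega
        have hNa : G.neighborFinset a = SB := by
          apply Finset.eq_of_subset_of_card_le (nbA a ha)
          rw [hB3, hdeg a, hd3]
        obtain ⟨e1, e2, e3, he12, he13, he23, hSBeq⟩ := Finset.card_eq_three.mp hB3
        have m1 : e1 ∈ SB := by rw [hSBeq]; simp
        have m2 : e2 ∈ SB := by rw [hSBeq]; simp
        have m3 : e3 ∈ SB := by rw [hSBeq]; simp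
        have adja : ∀ b ∈ SB, G.Adj a b := by
          intro b hb
          have : b ∈ G.neighborFinset a := by rw [hNa]; exact hb
          exact (SimpleGraph.mem_neighborFinset _ _ _).mp this
        exact hK23 (contains_k23 a0 a e1 e2 e3 hne.symm he12 he13 he23
          (adja0 e1 m1) (adja0 e2 m2) (adja0 e3 m3)
          (adja e1 m1) (adja e2 m2) (adja e3 m3))
      have uniqB : ∀ b ∈ SB, b ≠ b0 → G.degree b = 2 := by
        intro b hb hne
        by_contra h
        have hd3 : G.degree b = 3 := by have := hmin b; have := hmax b; omega
        have hNb : G.neighborFinset b = SA := by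
          apply Finset.eq_of_subset_of_card_le (nbB b hb)
          rw [hA3, hdeg b, hd3]
        obtain ⟨e1, e2, e3, he12, he13, he23, hSAeq⟩ := Finset.card_eq_three.mp hA3
        have m1 : e1 ∈ SA := by rw [hSAeq]; simp
        have m2 : e2 ∈ SA := by rw [hSAeq]; simp
        have m3 : e3 ∈ SA := by rw [hSAeq]; simp
        have adjb : ∀ a ∈ SA, G.Adj b a := by
          intro a ha
          have : a ∈ G.neighborFinset b := by rw [hNb]; exact ha
          exact (SimpleGraph.mem_neighborFinset _ _ _).mp this
        exact hK23 (contains_k23 b0 b e1 e2 e3 hne.symm he12 he13 he23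
          (adjb0 e1 m1) (adjb0 e2 m2) (adjb0 e3 m3)
          (adjb e1 m1) (adjb e2 m2) (adjb e3 m3))
      -- the two other vertices of SA
      obtain ⟨a1, a2, ha12, hSAer⟩ := Finset.card_eq_two.mp
        (by rw [Finset.card_erase_of_mem ha0, hA3] : (SA.erase a0).card = 2)
      have ha1e : a1 ∈ SA.erase a0 := by rw [hSAer]; simp
      have ha2e : a2 ∈ SA.erase a0 := by rw [hSAer]; simp
      have ha1 : a1 ∈ SA := Finset.mem_of_mem_erase ha1e
      have ha2 : a2 ∈ SA := Finset.mem_of_mem_erase ha2e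
      have ha10 : a1 ≠ a0 := (Finset.mem_erase.mp ha1e).1
      have ha20 : a2 ≠ a0 := (Finset.mem_erase.mp ha2e).1
      have hda1 : G.degree a1 = 2 := uniqA a1 ha1 ha10
      have hda2 : G.degree a2 = 2 := uniqA a2 ha2 ha20
      -- second neighbours of a1 and a2
      have hb0N1 : b0 ∈ G.neighborFinset a1 :=
        (SimpleGraph.mem_neighborFinset _ _ _).mpr (adjb0 a1 ha1).symm
      have hb0N2 : b0 ∈ G.neighborFinset a2 :=
        (SimpleGraph.mem_neighborFinset _ _ _).mpr (adjb0 a2 ha2).symm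
      obtain ⟨c1, hc1⟩ := Finset.card_eq_one.mp
        (by rw [Finset.card_erase_of_mem hb0N1, hdeg a1, hda1] :
          ((G.neighborFinset a1).erase b0).card = 1)
      obtain ⟨c2, hc2⟩ := Finset.card_eq_one.mp
        (by rw [Finset.card_erase_of_mem hb0N2, hdeg a2, hda2] :
          ((G.neighborFinset a2).erase b0).card = 1)
      have hc1e : c1 ∈ (G.neighborFinset a1).erase b0 := by rw [hc1]; simp
      have hc2e : c2 ∈ (G.neighborFinset a2).erase b0 := by rw [hc2]; simp
      have hc1N : c1 ∈ G.neighborFinset a1 := Finset.mem_of_mem_erase hc1e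
      have hc2N : c2 ∈ G.neighborFinset a2 := Finset.mem_of_mem_erase hc2e
      have hc1b0 : c1 ≠ b0 := (Finset.mem_erase.mp hc1e).1
      have hc2b0 : c2 ≠ b0 := (Finset.mem_erase.mp hc2e).1
      have hc1B : c1 ∈ SB := nbA a1 ha1 hc1N
      have hc2B : c2 ∈ SB := nbA a2 ha2 hc2N
      have ea1c1 : G.Adj a1 c1 := (SimpleGraph.mem_neighborFinset _ _ _).mp hc1N
      have ea2c2 : G.Adj a2 c2 := (SimpleGraph.mem_neighborFinset _ _ _).mp hc2N
      -- neighbourhoods of a1 and a2 are completely determined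
      have hNa1 : G.neighborFinset a1 = {b0, c1} := by
        rw [← Finset.insert_erase hb0N1, hc1]
      have hNa2 : G.neighborFinset a2 = {b0, c2} := by
        rw [← Finset.insert_erase hb0N2, hc2]
      -- c1 ≠ c2
      have hc12 : c1 ≠ c2 := by
        intro h
        have hadj2 : G.Adj a2 c1 := h ▸ ea2c2
        have hdc1 : G.degree c1 = 2 := uniqB c1 hc1B hc1b0
        have hsub3 : ({a0, a1, a2} : Finset V) ⊆ G.neighborFinset c1 := by
          intro w hw
          rw [SimpleGraph.mem_neighborFinset]
          rcases Finset.mem_insert.mp hw with rfl | hw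
          · exact (adja0 c1 hc1B).symm
          rcases Finset.mem_insert.mp hw with rfl | hw
          · exact ea1c1.symm
          · rw [Finset.mem_singleton.mp hw]; exact hadj2.symm
        have hcard3 : ({a0, a1, a2} : Finset V).card = 3 := by
          rw [Finset.card_insert_of_notMem (by simp [ha10.symm, ha20.symm]),
            Finset.card_insert_of_notMem (by simpa using ha12), Finset.card_singleton]
        have := Finset.card_le_card hsub3
        have h' := hdeg c1
        omega
      -- SB is exactly {b0, c1, c2}
      have hSBeq : ({b0, c1, c2} : Finset V) = SB := by
        apply Finset.eq_of_subset_of_card_le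
        · intro w hw
          rcases Finset.mem_insert.mp hw with rfl | hw
          · exact hb0
          rcases Finset.mem_insert.mp hw with rfl | hw
          · exact hc1B
          · rw [Finset.mem_singleton.mp hw]; exact hc2B
        · rw [hB3, Finset.card_insert_of_notMem (by simp [hc1b0.symm, hc2b0.symm]),
            Finset.card_insert_of_notMem (by simpa using hc12), Finset.card_singleton]
      -- SA is exactly {a0, a1, a2}
      have hSAeq : ({a0, a1, a2} : Finset V) = SA := by
        apply Finset.eq_of_subset_of_card_le
        · intro w hw
          rcases Finset.mem_insert.mp hw with rfl | hw
          · exact ha0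
          rcases Finset.mem_insert.mp hw with rfl | hw
          · exact ha1
          · rw [Finset.mem_singleton.mp hw]; exact ha2
        · rw [hA3, Finset.card_insert_of_notMem (by simp [ha10.symm, ha20.symm]),
            Finset.card_insert_of_notMem (by simpa using ha12), Finset.card_singleton]
      have huniv : ∀ v : V, v = a0 ∨ v = a1 ∨ v = a2 ∨ v = b0 ∨ v = c1 ∨ v = c2 := by
        intro v
        by_cases hv : v ∈ SA
        · rw [← hSAeq] at hv
          rcases Finset.mem_insert.mp hv with h | hv
          · exact Or.inl h
          rcases Finset.mem_insert.mp hv with h | hv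
          · exact Or.inr (Or.inl h)
          · exact Or.inr (Or.inr (Or.inl (Finset.mem_singleton.mp hv)))
        · have : v ∈ SB := (hpart v).mpr hv
          rw [← hSBeq] at this
          rcases Finset.mem_insert.mp this with h | hv'
          · exact Or.inr (Or.inr (Or.inr (Or.inl h)))
          rcases Finset.mem_insert.mp hv' with h | hv''
          · exact Or.inr (Or.inr (Or.inr (Or.inr (Or.inl h))))
          · exact Or.inr (Or.inr (Or.inr (Or.inr (Or.inr (Finset.mem_singleton.mp hv'')))))
      -- the two missing cross edges are absent
      have hnadj12 : ¬ G.Adj a1 c2 := by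
        intro h
        have : c2 ∈ G.neighborFinset a1 := (SimpleGraph.mem_neighborFinset _ _ _).mpr h
        rw [hNa1] at this
        rcases Finset.mem_insert.mp this with h' | h'
        · exact hc2b0 h'
        · exact hc12 (Finset.mem_singleton.mp h').symm
      have hnadj21 : ¬ G.Adj a2 c1 := by
        intro h
        have : c1 ∈ G.neighborFinset a2 := (SimpleGraph.mem_neighborFinset _ _ _).mpr h
        rw [hNa2] at this
        rcases Finset.mem_insert.mp this with h' | h'
        · exact hc1b0 h'
        · exact hc12 (Finset.mem_singleton.mp h')
      have hABne : ∀ a ∈ SA, ∀ b ∈ SB, a ≠ b := by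
        rintro a ha b hb rfl
        exact (hpart a).mp hb ha
      exact iso_c6bar a0 a1 a2 b0 c1 c2 huniv
        ha10.symm ha20.symm ha12
        hc1b0.symm hc2b0.symm hc12
        (hABne a1 ha1 c2 hc2B) (hABne a2 ha2 c1 hc1B)
        (adjb0 a0 ha0).symm (adja0 c1 hc1B) (adja0 c2 hc2B)
        (adjb0 a1 ha1).symm ea1c1
        (adjb0 a2 ha2).symm ea2c2
        hnadj12 hnadj21
        (noadjA a0 ha0 a1 ha1) (noadjA a0 ha0 a2 ha2) (noadjA a1 ha1 a2 ha2)
        (noadjB b0 hb0 c1 hc1B) (noadjB b0 hb0 c2 hc2B) (noadjB c1 hc1B c2 hc2B)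
    · exact absurd (side34_false G SA SB hmin hmax h4cyc hK23 hS hpart hcross hA3 hB4) id
    · exact absurd (side34_false G SB SA hmin hmax h4cyc hK23 hS hpart' hcross' hB3 hA4) id
end

section
/- Let π0 = (01234), π1 = (01432), π2 = (04312), π3 = (03421), cyclic permutations of {0,1,2,3,4}. Then: (i) the only antiroute of size 1 from π0 to π1 is {(01)}; (ii) the only antiroute of size 1 from π0 to π2 is {(12)}; (iii) the only antiroute of size 1 from π0 to π3 is {(34)}; (iv) the only antiroute of size 2 from π1 to π2 is {(02),(34)}; (v) there are exactly two antiroutes of size 2 from π2 to π3, namely {(01),(02)} and {(03),(04)}; (vi) there are exactly two antiroutes of size 2 from π1 to π3, namely {(02),(12)} and {(23),(24)}. -/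
private lemma route1 {γ κ : Equiv.Perm (Fin 5)} {P : Finset (Equiv.Perm (Fin 5))}
    (h : IsRoute γ κ P) (hc : P.card = 1) :
    ∃ x y : Fin 5, x ≠ y ∧ P = {Equiv.swap x y} ∧ (γ x = y ∨ γ y = x) ∧
      Equiv.swap x y * γ * Equiv.swap x y = κ := by
  obtain ⟨L, hnd, hfs, hr⟩ := h
  have hlen : L.length = 1 := by
    rw [← List.toFinset_card_of_nodup hnd, hfs]; exact hc
  obtain ⟨a, rfl⟩ := List.length_eq_one_iff.mp hlen
  obtain ⟨x, y, hxy, hτ, hadj, hr'⟩ := hr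
  subst hτ
  exact ⟨x, y, hxy, by rw [← hfs]; simp, hadj, hr'⟩

private lemma route2 {γ κ : Equiv.Perm (Fin 5)} {P : Finset (Equiv.Perm (Fin 5))}
    (h : IsRoute γ κ P) (hc : P.card = 2) :
    ∃ x y u v : Fin 5, x ≠ y ∧ u ≠ v ∧
      P = {Equiv.swap x y, Equiv.swap u v} ∧ (γ x = y ∨ γ y = x) ∧
      ((Equiv.swap x y * γ * Equiv.swap x y) u = v ∨
        (Equiv.swap x y * γ * Equiv.swap x y) v = u) ∧
      Equiv.swap u v * (Equiv.swap x y * γ * Equiv.swap x y) * Equiv.swap u v = κ := by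
  obtain ⟨L, hnd, hfs, hr⟩ := h
  have hlen : L.length = 2 := by
    rw [← List.toFinset_card_of_nodup hnd, hfs]; exact hc
  obtain ⟨a, b, rfl⟩ := List.length_eq_two.mp hlen
  obtain ⟨x, y, hxy, hτ1, hadj1, hr1⟩ := hr
  obtain ⟨u, v, huv, hτ2, hadj2, hr2⟩ := hr1
  subst hτ1; subst hτ2
  exact ⟨x, y, u, v, hxy, huv, by rw [← hfs]; simp, hadj1, hadj2, hr2⟩


/-- For `π0 = (01234)`, `π1 = (01432)`, `π2 = (04312)`, `π3 = (03421)`: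
(i) the only antiroute of size 1 from `π0` to `π1` is `{(01)}`;
(ii) the only antiroute of size 1 from `π0` to `π2` is `{(12)}`;
(iii) the only antiroute of size 1 from `π0` to `π3` is `{(34)}`;
(iv) the only antiroute of size 2 from `π1` to `π2` is `{(02),(34)}`;
(v) the antiroutes of size 2 from `π2` to `π3` are exactly `{(01),(02)}` and `{(03),(04)}`;
(vi) the antiroutes of size 2 from `π1` to `π3` are exactly `{(02),(12)}` and `{(23),(24)}`. -/
theorem antiroutes_star_configuration
    (π0 π1 π2 π3 : Equiv.Perm (Fin 5))
    (h0 : π0 = cyc5 0 1 2 3 4) (h1 : π1 = cyc5 0 1 4 3 2)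
    (h2 : π2 = cyc5 0 4 3 1 2) (h3 : π3 = cyc5 0 3 4 2 1) :
    (IsAntiroute π0 π1 {Equiv.swap 0 1} ∧
      ∀ P, IsAntiroute π0 π1 P → P.card = 1 → P = {Equiv.swap 0 1}) ∧
    (IsAntiroute π0 π2 {Equiv.swap 1 2} ∧
      ∀ P, IsAntiroute π0 π2 P → P.card = 1 → P = {Equiv.swap 1 2}) ∧
    (IsAntiroute π0 π3 {Equiv.swap 3 4} ∧
      ∀ P, IsAntiroute π0 π3 P → P.card = 1 → P = {Equiv.swap 3 4}) ∧
    (IsAntiroute π1 π2 {Equiv.swap 0 2, Equiv.swap 3 4} ∧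
      ∀ P, IsAntiroute π1 π2 P → P.card = 2 → P = {Equiv.swap 0 2, Equiv.swap 3 4}) ∧
    (IsAntiroute π2 π3 {Equiv.swap 0 1, Equiv.swap 0 2} ∧
      IsAntiroute π2 π3 {Equiv.swap 0 3, Equiv.swap 0 4} ∧
      ∀ P, IsAntiroute π2 π3 P → P.card = 2 →
        (P = {Equiv.swap 0 1, Equiv.swap 0 2} ∨ P = {Equiv.swap 0 3, Equiv.swap 0 4})) ∧
    (IsAntiroute π1 π3 {Equiv.swap 0 2, Equiv.swap 1 2} ∧
      IsAntiroute π1 π3 {Equiv.swap 2 3, Equiv.swap 2 4} ∧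
      ∀ P, IsAntiroute π1 π3 P → P.card = 2 →
        (P = {Equiv.swap 0 2, Equiv.swap 1 2} ∨ P = {Equiv.swap 2 3, Equiv.swap 2 4})) := by
  subst h0 h1 h2 h3
  refine ⟨⟨?_, ?_⟩, ⟨?_, ?_⟩, ⟨?_, ?_⟩, ⟨?_, ?_⟩, ⟨?_, ?_, ?_⟩, ⟨?_, ?_, ?_⟩⟩
  -- (i) existence
  · exact ⟨[Equiv.swap 0 1], by simp, by simp,
      0, 1, by decide, rfl, by decide, show _ = _ by decide⟩
  -- (i) uniqueness
  · intro P h hc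
    obtain ⟨x, y, hxy, hP, hadj, heq⟩ := route1 h hc
    rw [hP]
    have key : ∀ x y : Fin 5, x ≠ y →
        ((cyc5 0 1 2 3 4) x = y ∨ (cyc5 0 1 2 3 4) y = x) →
        Equiv.swap x y * cyc5 0 1 2 3 4 * Equiv.swap x y = (cyc5 0 1 4 3 2)⁻¹ →
        Equiv.swap x y = Equiv.swap 0 1 := by decide
    rw [key x y hxy hadj heq]
  -- (ii) existence
  · exact ⟨[Equiv.swap 1 2], by simp, by simp,
      1, 2, by decide, rfl, by decide, show _ = _ by decide⟩
  -- (ii) uniqueness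
  · intro P h hc
    obtain ⟨x, y, hxy, hP, hadj, heq⟩ := route1 h hc
    rw [hP]
    have key : ∀ x y : Fin 5, x ≠ y →
        ((cyc5 0 1 2 3 4) x = y ∨ (cyc5 0 1 2 3 4) y = x) →
        Equiv.swap x y * cyc5 0 1 2 3 4 * Equiv.swap x y = (cyc5 0 4 3 1 2)⁻¹ →
        Equiv.swap x y = Equiv.swap 1 2 := by decide
    rw [key x y hxy hadj heq]
  -- (iii) existence
  · exact ⟨[Equiv.swap 3 4], by simp, by simp,
      3, 4, by decide, rfl, by decide, show _ = _ by decide⟩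
  -- (iii) uniqueness
  · intro P h hc
    obtain ⟨x, y, hxy, hP, hadj, heq⟩ := route1 h hc
    rw [hP]
    have key : ∀ x y : Fin 5, x ≠ y →
        ((cyc5 0 1 2 3 4) x = y ∨ (cyc5 0 1 2 3 4) y = x) →
        Equiv.swap x y * cyc5 0 1 2 3 4 * Equiv.swap x y = (cyc5 0 3 4 2 1)⁻¹ →
        Equiv.swap x y = Equiv.swap 3 4 := by decide
    rw [key x y hxy hadj heq]
  -- (iv) existence
  · exact ⟨[Equiv.swap 3 4, Equiv.swap 0 2], by decide, by decide,
      3, 4, by decide, rfl, by decide,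
      0, 2, by decide, rfl, by decide, show _ = _ by decide⟩
  -- (iv) uniqueness
  · intro P h hc
    obtain ⟨x, y, u, v, hxy, huv, hP, hadj1, hadj2, heq⟩ := route2 h hc
    rw [hP]
    have key : ∀ x y u v : Fin 5, x ≠ y → u ≠ v →
        ((cyc5 0 1 4 3 2) x = y ∨ (cyc5 0 1 4 3 2) y = x) →
        ((Equiv.swap x y * cyc5 0 1 4 3 2 * Equiv.swap x y) u = v ∨
          (Equiv.swap x y * cyc5 0 1 4 3 2 * Equiv.swap x y) v = u) →
        Equiv.swap u v * (Equiv.swap x y * cyc5 0 1 4 3 2 * Equiv.swap x y) * Equiv.swap u v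
          = (cyc5 0 4 3 1 2)⁻¹ →
        ({Equiv.swap x y, Equiv.swap u v} : Finset (Equiv.Perm (Fin 5)))
          = {Equiv.swap 0 2, Equiv.swap 3 4} := by decide
    exact key x y u v hxy huv hadj1 hadj2 heq
  -- (v) existence 1
  · exact ⟨[Equiv.swap 0 2, Equiv.swap 0 1], by decide, by decide,
      0, 2, by decide, rfl, by decide,
      0, 1, by decide, rfl, by decide, show _ = _ by decide⟩
  -- (v) existence 2
  · exact ⟨[Equiv.swap 0 4, Equiv.swap 0 3], by decide, by decide,
      0, 4, by decide, rfl, by decide,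
      0, 3, by decide, rfl, by decide, show _ = _ by decide⟩
  -- (v) uniqueness
  · intro P h hc
    obtain ⟨x, y, u, v, hxy, huv, hP, hadj1, hadj2, heq⟩ := route2 h hc
    rw [hP]
    have key : ∀ x y u v : Fin 5, x ≠ y → u ≠ v →
        ((cyc5 0 4 3 1 2) x = y ∨ (cyc5 0 4 3 1 2) y = x) →
        ((Equiv.swap x y * cyc5 0 4 3 1 2 * Equiv.swap x y) u = v ∨
          (Equiv.swap x y * cyc5 0 4 3 1 2 * Equiv.swap x y) v = u) →
        Equiv.swap u v * (Equiv.swap x y * cyc5 0 4 3 1 2 * Equiv.swap x y) * Equiv.swap u v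
          = (cyc5 0 3 4 2 1)⁻¹ →
        (({Equiv.swap x y, Equiv.swap u v} : Finset (Equiv.Perm (Fin 5)))
            = {Equiv.swap 0 1, Equiv.swap 0 2} ∨
          ({Equiv.swap x y, Equiv.swap u v} : Finset (Equiv.Perm (Fin 5)))
            = {Equiv.swap 0 3, Equiv.swap 0 4}) := by decide
    exact key x y u v hxy huv hadj1 hadj2 heq
  -- (vi) existence 1
  · exact ⟨[Equiv.swap 0 2, Equiv.swap 1 2], by decide, by decide,
      0, 2, by decide, rfl, by decide,
      1, 2, by decide, rfl, by decide, show _ = _ by decide⟩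
  -- (vi) existence 2
  · exact ⟨[Equiv.swap 2 3, Equiv.swap 2 4], by decide, by decide,
      2, 3, by decide, rfl, by decide,
      2, 4, by decide, rfl, by decide, show _ = _ by decide⟩
  -- (vi) uniqueness
  · intro P h hc
    obtain ⟨x, y, u, v, hxy, huv, hP, hadj1, hadj2, heq⟩ := route2 h hc
    rw [hP]
    have key : ∀ x y u v : Fin 5, x ≠ y → u ≠ v →
        ((cyc5 0 1 4 3 2) x = y ∨ (cyc5 0 1 4 3 2) y = x) →
        ((Equiv.swap x y * cyc5 0 1 4 3 2 * Equiv.swap x y) u = v ∨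
          (Equiv.swap x y * cyc5 0 1 4 3 2 * Equiv.swap x y) v = u) →
        Equiv.swap u v * (Equiv.swap x y * cyc5 0 1 4 3 2 * Equiv.swap x y) * Equiv.swap u v
          = (cyc5 0 3 4 2 1)⁻¹ →
        (({Equiv.swap x y, Equiv.swap u v} : Finset (Equiv.Perm (Fin 5)))
            = {Equiv.swap 0 2, Equiv.swap 1 2} ∨
          ({Equiv.swap x y, Equiv.swap u v} : Finset (Equiv.Perm (Fin 5)))
            = {Equiv.swap 2 3, Equiv.swap 2 4}) := by decide
    exact key x y u v hxy huv hadj1 hadj2 heq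
end

section
/- Let π0 = (01234), π1 = (01432), π2 = (03241), π3 = (04231), cyclic permutations of {0,1,2,3,4}. Then: (i) the only antiroute of size 1 from π0 to π1 is {(01)}, and likewise the only antiroute of size 1 from π2 to π3 is {(01)}; (ii) the only antiroute of size 1 from π1 to π2 is {(23)}, and likewise the only antiroute of size 1 from π0 to π3 is {(23)}; (iii) there are exactly two antiroutes of size 2 from π0 to π2, namely {(04),(14)} and {(24),(34)}, and these same two sets are also exactly the antiroutes of size 2 from π1 to π3. -/
instance decRouteList : ∀ (γ : Equiv.Perm (Fin 5)) (L : List (Equiv.Perm (Fin 5)))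
    (κ : Equiv.Perm (Fin 5)), Decidable (RouteList γ L κ)
  | γ, [], κ => inferInstanceAs (Decidable (γ = κ))
  | γ, τ :: L, κ =>
    haveI : Decidable (RouteList (τ * γ * τ) L κ) := decRouteList _ L _
    inferInstanceAs (Decidable (∃ x y, x ≠ y ∧ τ = Equiv.swap x y ∧ (γ x = y ∨ γ y = x) ∧
      RouteList (τ * γ * τ) L κ))

lemma route_card_one {γ κ : Equiv.Perm (Fin 5)} {P} (h : IsRoute γ κ P) (hc : P.card = 1) :
    ∃ x y : Fin 5, x ≠ y ∧ (γ x = y ∨ γ y = x) ∧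
      Equiv.swap x y * γ * Equiv.swap x y = κ ∧ P = {Equiv.swap x y} := by
  obtain ⟨L, hnd, hfs, hr⟩ := h
  have hlen : L.length = 1 := by
    rw [← List.toFinset_card_of_nodup hnd, hfs, hc]
  obtain ⟨a, rfl⟩ := List.length_eq_one_iff.mp hlen
  obtain ⟨x, y, hxy, rfl, hadj, hr2⟩ := hr
  exact ⟨x, y, hxy, hadj, hr2, by simp [← hfs]⟩

lemma route_card_two {γ κ : Equiv.Perm (Fin 5)} {P} (h : IsRoute γ κ P) (hc : P.card = 2) :
    ∃ x y x' y' : Fin 5, x ≠ y ∧ x' ≠ y' ∧ (γ x = y ∨ γ y = x) ∧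
      ((Equiv.swap x y * γ * Equiv.swap x y) x' = y' ∨
        (Equiv.swap x y * γ * Equiv.swap x y) y' = x') ∧
      Equiv.swap x' y' * (Equiv.swap x y * γ * Equiv.swap x y) * Equiv.swap x' y' = κ ∧
      P = {Equiv.swap x y, Equiv.swap x' y'} := by
  obtain ⟨L, hnd, hfs, hr⟩ := h
  have hlen : L.length = 2 := by
    rw [← List.toFinset_card_of_nodup hnd, hfs, hc]
  obtain ⟨a, b, rfl⟩ := List.length_eq_two.mp hlen
  obtain ⟨x, y, hxy, rfl, hadj, hr2⟩ := hr
  obtain ⟨x', y', hxy', rfl, hadj', hr3⟩ := hr2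
  exact ⟨x, y, x', y', hxy, hxy', hadj, hadj', hr3, by simp [← hfs]⟩

/-- For `π0 = (01234)`, `π1 = (01432)`, `π2 = (03241)`, `π3 = (04231)`:
(i) the only antiroute of size 1 from `π0` to `π1` is `{(01)}`, and likewise the only
antiroute of size 1 from `π2` to `π3` is `{(01)}`;
(ii) the only antiroute of size 1 from `π1` to `π2` is `{(23)}`, and likewise the only
antiroute of size 1 from `π0` to `π3` is `{(23)}`;
(iii) the antiroutes of size 2 from `π0` to `π2` are exactly `{(04),(14)}` and
`{(24),(34)}`, and these same two sets are also exactly the antiroutes of size 2 from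
`π1` to `π3`. -/
theorem antiroutes_cycle_configuration
    (π0 π1 π2 π3 : Equiv.Perm (Fin 5))
    (h0 : π0 = cyc5 0 1 2 3 4) (h1 : π1 = cyc5 0 1 4 3 2)
    (h2 : π2 = cyc5 0 3 2 4 1) (h3 : π3 = cyc5 0 4 2 3 1) :
    (IsAntiroute π0 π1 {Equiv.swap 0 1} ∧
      ∀ P, IsAntiroute π0 π1 P → P.card = 1 → P = {Equiv.swap 0 1}) ∧
    (IsAntiroute π2 π3 {Equiv.swap 0 1} ∧
      ∀ P, IsAntiroute π2 π3 P → P.card = 1 → P = {Equiv.swap 0 1}) ∧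
    (IsAntiroute π1 π2 {Equiv.swap 2 3} ∧
      ∀ P, IsAntiroute π1 π2 P → P.card = 1 → P = {Equiv.swap 2 3}) ∧
    (IsAntiroute π0 π3 {Equiv.swap 2 3} ∧
      ∀ P, IsAntiroute π0 π3 P → P.card = 1 → P = {Equiv.swap 2 3}) ∧
    (IsAntiroute π0 π2 {Equiv.swap 0 4, Equiv.swap 1 4} ∧
      IsAntiroute π0 π2 {Equiv.swap 2 4, Equiv.swap 3 4} ∧
      (∀ P, IsAntiroute π0 π2 P → P.card = 2 →
        (P = {Equiv.swap 0 4, Equiv.swap 1 4} ∨ P = {Equiv.swap 2 4, Equiv.swap 3 4}))) ∧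
    (IsAntiroute π1 π3 {Equiv.swap 0 4, Equiv.swap 1 4} ∧
      IsAntiroute π1 π3 {Equiv.swap 2 4, Equiv.swap 3 4} ∧
      (∀ P, IsAntiroute π1 π3 P → P.card = 2 →
        (P = {Equiv.swap 0 4, Equiv.swap 1 4} ∨ P = {Equiv.swap 2 4, Equiv.swap 3 4}))) := by
  
  subst h0 h1 h2 h3
  refine ⟨⟨⟨[Equiv.swap 0 1], by decide, by decide, by decide⟩, ?_⟩,
    ⟨⟨[Equiv.swap 0 1], by decide, by decide, by decide⟩, ?_⟩,
    ⟨⟨[Equiv.swap 2 3], by decide, by decide, by decide⟩, ?_⟩,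
    ⟨⟨[Equiv.swap 2 3], by decide, by decide, by decide⟩, ?_⟩,
    ⟨⟨[Equiv.swap 0 4, Equiv.swap 1 4], by decide, by decide, by decide⟩,
     ⟨[Equiv.swap 3 4, Equiv.swap 2 4], by decide, by decide, by decide⟩, ?_⟩,
    ⟨⟨[Equiv.swap 1 4, Equiv.swap 0 4], by decide, by decide, by decide⟩,
     ⟨[Equiv.swap 3 4, Equiv.swap 2 4], by decide, by decide, by decide⟩, ?_⟩⟩
  · intro P hP hc
    obtain ⟨x, y, hxy, hadj, heq, rfl⟩ := route_card_one hP hc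
    clear hP hc
    revert hxy hadj heq; revert x y
    decide
  · intro P hP hc
    obtain ⟨x, y, hxy, hadj, heq, rfl⟩ := route_card_one hP hc
    clear hP hc
    revert hxy hadj heq; revert x y
    decide
  · intro P hP hc
    obtain ⟨x, y, hxy, hadj, heq, rfl⟩ := route_card_one hP hc
    clear hP hc
    revert hxy hadj heq; revert x y
    decide
  · intro P hP hc
    obtain ⟨x, y, hxy, hadj, heq, rfl⟩ := route_card_one hP hc
    clear hP hc
    revert hxy hadj heq; revert x y
    decide
  · intro P hP hc
    obtain ⟨x, y, x', y', hxy, hxy', hadj, hadj', heq, rfl⟩ := route_card_two hP hc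
    clear hP hc
    revert hxy hxy' hadj hadj' heq; revert x y x' y'
    decide
  · intro P hP hc
    obtain ⟨x, y, x', y', hxy, hxy', hadj, hadj', heq, rfl⟩ := route_card_two hP hc
    clear hP hc
    revert hxy hxy' hadj hadj' heq; revert x y x' y'
    decide
end
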